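/- arXiv:1810.12951 — 7 statements merged into one kernel-verified Lean document; each statement's English description precedes it below -/
import Mathlib

section
/- Let β ∈ (0,1) and let f be continuous on [0, ∞). Then for every t > 0 the function u(s) = J^{1−β}(J^β f)(s) (with J^β f extended by 0 at s = 0) is differentiable at t with u′(t) = f(t) − f(0); equivalently, the Caputo-type derivative ∂^β applied to J^β f satisfies ∂^β J^β f(t) = f(t) − f(0) for all t > 0. -/
open MeasureTheory intervalIntegral Set

lemma beta_real {β : ℝ} (hβ0 : 0 < β) (hβ1 : β < 1) :
    ∫ u in (0:ℝ)..1, u ^ (β - 1) * (1 - u) ^ (-β) = Real.Gamma β * Real.Gamma (1 - β) := by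
  have h1 : (0:ℝ) < 1 - β := by linarith
  have hc := Complex.Gamma_mul_Gamma_eq_betaIntegral (s := (β:ℂ)) (t := ((1-β:ℝ):ℂ))
    (by simpa using hβ0) (by simpa using h1)
  have hsum : (β:ℂ) + ((1-β:ℝ):ℂ) = 1 := by push_cast; ring
  rw [hsum, Complex.Gamma_one, one_mul] at hc
  have key : Complex.betaIntegral (β:ℂ) ((1-β:ℝ):ℂ)
      = ((∫ u in (0:ℝ)..1, u ^ (β - 1) * (1 - u) ^ (-β) : ℝ) : ℂ) := by
    rw [Complex.betaIntegral, ← intervalIntegral.integral_ofReal]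
    refine intervalIntegral.integral_congr (fun x hx => ?_)
    rw [Set.uIcc_of_le (by norm_num : (0:ℝ) ≤ 1)] at hx
    obtain ⟨hx0, hx1⟩ := hx
    rw [Complex.ofReal_mul, Complex.ofReal_cpow hx0, Complex.ofReal_cpow (by linarith : (0:ℝ) ≤ 1 - x)]
    push_cast
    ring_nf
  rw [key, Complex.Gamma_ofReal, Complex.Gamma_ofReal] at hc
  exact_mod_cast hc.symm

lemma inner_kernel {β t r : ℝ} (hβ0 : 0 < β) (hβ1 : β < 1) (hr : r < t) :
    ∫ s in r..t, (t - s) ^ (-β) * (s - r) ^ (β - 1)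
      = Real.Gamma β * Real.Gamma (1 - β) := by
  have hc : (0:ℝ) < t - r := by linarith
  have step1 : ∫ s in r..t, (t - s) ^ (-β) * (s - r) ^ (β - 1)
      = ∫ w in (0:ℝ)..(t - r), (t - r - w) ^ (-β) * w ^ (β - 1) := by
    have := intervalIntegral.integral_comp_add_right
      (a := (0:ℝ)) (b := t - r) (fun s => (t - s) ^ (-β) * (s - r) ^ (β - 1)) r
    simp only [zero_add, sub_add_cancel] at this
    rw [← this]
    congr 1
    ext w
    ring_nf
  have step2 : ∫ w in (0:ℝ)..(t - r), (t - r - w) ^ (-β) * w ^ (β - 1)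
      = (t - r) • ∫ u in (0:ℝ)..1, (t - r - (t - r) * u) ^ (-β) * ((t - r) * u) ^ (β - 1) := by
    have := intervalIntegral.smul_integral_comp_mul_left
      (a := (0:ℝ)) (b := 1) (fun w => (t - r - w) ^ (-β) * w ^ (β - 1)) (t - r)
    simp only [mul_zero, mul_one] at this
    rw [← this]
  rw [step1, step2, ← intervalIntegral.integral_smul]
  have congr1 : ∫ u in (0:ℝ)..1,
      (t - r) • ((t - r - (t - r) * u) ^ (-β) * ((t - r) * u) ^ (β - 1))
      = ∫ u in (0:ℝ)..1, u ^ (β - 1) * (1 - u) ^ (-β) := by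
    refine intervalIntegral.integral_congr (fun u hu => ?_)
    rw [Set.uIcc_of_le (by norm_num : (0:ℝ) ≤ 1)] at hu
    obtain ⟨hu0, hu1⟩ := hu
    have h1 : t - r - (t - r) * u = (t - r) * (1 - u) := by ring
    rw [h1, Real.mul_rpow hc.le (by linarith), Real.mul_rpow hc.le hu0, smul_eq_mul]
    have : (t - r) * ((t - r) ^ (-β) * (1 - u) ^ (-β) * ((t - r) ^ (β - 1) * u ^ (β - 1)))
        = ((t - r) * ((t - r) ^ (-β) * (t - r) ^ (β - 1))) * (u ^ (β - 1) * (1 - u) ^ (-β)) := by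
      ring
    rw [this, ← Real.rpow_add hc, show -β + (β - 1) = -1 by ring, Real.rpow_neg_one,
      mul_inv_cancel₀ hc.ne', one_mul]
  rw [congr1, beta_real hβ0 hβ1]

lemma measurable_rpow_const' (c : ℝ) : Measurable fun x : ℝ => x ^ c :=
  measurable_of_continuousOn_compl_singleton 0 fun x hx =>
    (Real.continuousAt_rpow_const x c (Or.inl hx)).continuousWithinAt

lemma inner_intable {β : ℝ} (hβ0 : 0 < β) (s : ℝ) (g : ℝ → ℝ)
    (hg : Continuous g) :
    IntervalIntegrable (fun r => (s - r) ^ (β - 1) * g r) volume 0 s := by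
  have h1 : IntervalIntegrable (fun x : ℝ => x ^ (β - 1)) volume 0 s :=
    intervalIntegrable_rpow' (by linarith)
  have h2 := (h1.comp_sub_left s).symm
  simp only [sub_zero, sub_self] at h2
  exact h2.mul_continuousOn hg.continuousOn

lemma kernel_primitive {β : ℝ} (hβ0 : 0 < β) {s : ℝ} (hs : 0 ≤ s) :
    ∫ r in (0:ℝ)..s, (s - r) ^ (β - 1) = s ^ β / β := by
  rw [intervalIntegral.integral_comp_sub_left (fun x => x ^ (β - 1)) s]
  rw [sub_self, sub_zero, integral_rpow (Or.inl (by linarith))]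
  rw [show β - 1 + 1 = β by ring, Real.zero_rpow hβ0.ne']
  ring

lemma fubini_key {β t : ℝ} (hβ0 : 0 < β) (hβ1 : β < 1) (ht : 0 < t)
    (g : ℝ → ℝ) (hg : Continuous g) :
    ∫ s in (0:ℝ)..t, (t - s) ^ (-β) * ∫ r in (0:ℝ)..s, (s - r) ^ (β - 1) * g r
      = Real.Gamma β * Real.Gamma (1 - β) * ∫ r in (0:ℝ)..t, g r := by
  set S : Set (ℝ × ℝ) := {p | 0 < p.2 ∧ p.2 < p.1 ∧ p.1 < t} with hS_def
  have hS : MeasurableSet S := by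
    apply MeasurableSet.inter (measurableSet_lt measurable_const measurable_snd)
    exact MeasurableSet.inter (measurableSet_lt measurable_snd measurable_fst)
      (measurableSet_lt measurable_fst measurable_const)
  set φ : ℝ × ℝ → ℝ :=
    fun p => (t - p.1) ^ (-β) * ((p.1 - p.2) ^ (β - 1) * g p.2) with hφ_def
  have hφm : Measurable φ := by
    apply Measurable.mul
    · exact (measurable_rpow_const' (-β)).comp (measurable_const.sub measurable_fst)
    · exact ((measurable_rpow_const' (β - 1)).comp (measurable_fst.sub measurable_snd)).mul
        (hg.measurable.comp measurable_snd)
  set H : ℝ × ℝ → ℝ := S.indicator φ with hH_def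
  have hHm : AEStronglyMeasurable H (volume.prod volume) :=
    (hφm.indicator hS).aestronglyMeasurable
  -- slice descriptions (pointwise)
  have slice1 : ∀ s : ℝ, 0 < s → s < t → ∀ r : ℝ,
      H (s, r) = (Ioo 0 s).indicator
        (fun r => (t - s) ^ (-β) * ((s - r) ^ (β - 1) * g r)) r := by
    intro s hs0 hst r
    by_cases hr : r ∈ Ioo 0 s
    · rw [Set.indicator_of_mem hr, hH_def,
        Set.indicator_of_mem (show (s, r) ∈ S from ⟨hr.1, hr.2, hst⟩)]
    · rw [Set.indicator_of_notMem hr, hH_def,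
        Set.indicator_of_notMem (fun hmem => hr ⟨hmem.1, hmem.2.1⟩)]
  have slice1' : ∀ s : ℝ, s ∉ Ioo (0:ℝ) t → ∀ r : ℝ, H (s, r) = 0 := by
    intro s hs r
    rw [hH_def, Set.indicator_of_notMem]
    intro hmem
    exact hs ⟨lt_trans hmem.1 hmem.2.1, hmem.2.2⟩
  have slice2 : ∀ r : ℝ, 0 < r → r < t → ∀ s : ℝ,
      H (s, r) = (Ioo r t).indicator
        (fun s => ((t - s) ^ (-β) * (s - r) ^ (β - 1)) * g r) s := by
    intro r hr0 hrt s
    by_cases hs : s ∈ Ioo r t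
    · rw [Set.indicator_of_mem hs, hH_def,
        Set.indicator_of_mem (show (s, r) ∈ S from ⟨hr0, hs.1, hs.2⟩)]
      show (t - s) ^ (-β) * ((s - r) ^ (β - 1) * g r) = _
      ring
    · rw [Set.indicator_of_notMem hs, hH_def,
        Set.indicator_of_notMem (fun hmem => hs ⟨hmem.2.1, hmem.2.2⟩)]
  have slice2' : ∀ r : ℝ, r ∉ Ioo (0:ℝ) t → ∀ s : ℝ, H (s, r) = 0 := by
    intro r hr s
    rw [hH_def, Set.indicator_of_notMem]
    intro hmem
    exact hr ⟨hmem.1, lt_trans hmem.2.1 hmem.2.2⟩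
  -- basic integrable pieces
  have base : ∀ s : ℝ, 0 < s →
      IntegrableOn (fun r => (t - s) ^ (-β) * ((s - r) ^ (β - 1) * g r))
        (Ioo 0 s) volume := by
    intro s hs0
    have h3 := (inner_intable hβ0 s g hg).const_mul ((t - s) ^ (-β))
    rwa [intervalIntegrable_iff_integrableOn_Ioo_of_le hs0.le] at h3
  -- integrability of slices in r
  have slice_int : ∀ s : ℝ, Integrable (fun r => H (s, r)) volume := by
    intro s
    by_cases hs : s ∈ Ioo (0:ℝ) t
    · have : (fun r => H (s, r)) = (Ioo 0 s).indicator
          (fun r => (t - s) ^ (-β) * ((s - r) ^ (β - 1) * g r)) :=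
        funext (slice1 s hs.1 hs.2)
      rw [this, integrable_indicator_iff measurableSet_Ioo]
      exact base s hs.1
    · have : (fun r => H (s, r)) = (fun _ => (0:ℝ)) := funext (slice1' s hs)
      rw [this]
      exact integrable_zero _ _ _
  -- bound
  obtain ⟨M, hM⟩ := isCompact_Icc.exists_bound_of_continuousOn
    (s := Icc (0:ℝ) t) hg.continuousOn
  have hM0 : 0 ≤ M := le_trans (norm_nonneg (g 0)) (hM 0 ⟨le_refl 0, ht.le⟩)
  set C : ℝ := M * t ^ β / β with hC_def
  have bound_int : Integrable
      ((Ioo (0:ℝ) t).indicator (fun s => C * (t - s) ^ (-β))) volume := by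
    rw [integrable_indicator_iff measurableSet_Ioo]
    have h1 : IntervalIntegrable (fun x : ℝ => x ^ (-β)) volume 0 t :=
      intervalIntegrable_rpow' (by linarith)
    have h2 := (h1.comp_sub_left t).symm
    simp only [sub_zero, sub_self] at h2
    have h3 := h2.const_mul C
    rwa [intervalIntegrable_iff_integrableOn_Ioo_of_le ht.le] at h3
  have norm_int : Integrable (fun s => ∫ r, ‖H (s, r)‖) volume := by
    apply Integrable.mono' bound_int (hHm.norm.integral_prod_right')
    refine Filter.Eventually.of_forall (fun s => ?_)
    rw [Real.norm_of_nonneg (integral_nonneg (fun r => norm_nonneg _))]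
    by_cases hs : s ∈ Ioo (0:ℝ) t
    · rw [Set.indicator_of_mem hs]
      have hts : (0:ℝ) < t - s := by linarith [hs.2]
      have key : (fun r => ‖H (s, r)‖) = (Ioo 0 s).indicator
          (fun r => ‖(t - s) ^ (-β) * ((s - r) ^ (β - 1) * g r)‖) := by
        funext r
        rw [slice1 s hs.1 hs.2 r, norm_indicator_eq_indicator_norm]
      calc ∫ r, ‖H (s, r)‖
          = ∫ r in Ioo 0 s, ‖(t - s) ^ (-β) * ((s - r) ^ (β - 1) * g r)‖ := by
            rw [show (fun r => ‖H (s, r)‖) = _ from key,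
              MeasureTheory.integral_indicator measurableSet_Ioo]
        _ ≤ ∫ r in Ioo 0 s, ((t - s) ^ (-β) * M) * (s - r) ^ (β - 1) := by
            apply setIntegral_mono_on ((base s hs.1).norm)
            · have h1 : IntervalIntegrable (fun x : ℝ => x ^ (β - 1)) volume 0 s :=
                intervalIntegrable_rpow' (by linarith)
              have h2 := (h1.comp_sub_left s).symm
              simp only [sub_zero, sub_self] at h2
              have h3 := h2.const_mul ((t - s) ^ (-β) * M)
              rwa [intervalIntegrable_iff_integrableOn_Ioo_of_le hs.1.le] at h3
            · exact measurableSet_Ioo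
            · intro r hr
              have hsr : (0:ℝ) < s - r := by linarith [hr.2]
              rw [norm_mul, norm_mul,
                Real.norm_of_nonneg (Real.rpow_nonneg hts.le _),
                Real.norm_of_nonneg (Real.rpow_nonneg hsr.le _)]
              have hgr : ‖g r‖ ≤ M := hM r ⟨hr.1.le, by linarith [hr.2, hs.2]⟩
              calc (t - s) ^ (-β) * ((s - r) ^ (β - 1) * ‖g r‖)
                  ≤ (t - s) ^ (-β) * ((s - r) ^ (β - 1) * M) := by gcongr
                _ = ((t - s) ^ (-β) * M) * (s - r) ^ (β - 1) := by ring
        _ = (t - s) ^ (-β) * M * (s ^ β / β) := by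
            rw [MeasureTheory.integral_const_mul, ← integral_Ioc_eq_integral_Ioo,
              ← intervalIntegral.integral_of_le hs.1.le, kernel_primitive hβ0 hs.1.le]
        _ ≤ (t - s) ^ (-β) * M * (t ^ β / β) := by
            gcongr <;> linarith [hs.1, hs.2]
        _ = C * (t - s) ^ (-β) := by rw [hC_def]; ring
    · rw [Set.indicator_of_notMem hs]
      have : (fun r => ‖H (s, r)‖) = (fun _ => (0:ℝ)) := by
        funext r; rw [slice1' s hs r, norm_zero]
      rw [show (fun r => ‖H (s, r)‖) = _ from this]
      simp
  have hH_int : Integrable H (volume.prod volume) := by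
    rw [integrable_prod_iff hHm]
    exact ⟨Filter.Eventually.of_forall slice_int, norm_int⟩
  -- now the computation
  have compl1 : ∀ s ∈ (Ioo (0:ℝ) t)ᶜ, (∫ r, H (s, r)) = 0 := by
    intro s hs
    rw [show (fun r => H (s, r)) = (fun _ => (0:ℝ)) from funext (slice1' s hs)]
    simp
  have compl2 : ∀ r ∈ (Ioo (0:ℝ) t)ᶜ, (∫ s, H (s, r)) = 0 := by
    intro r hr
    rw [show (fun s => H (s, r)) = (fun _ => (0:ℝ)) from funext (slice2' r hr)]
    simp
  have lhs_eq : ∫ s in (0:ℝ)..t, (t - s) ^ (-β) * ∫ r in (0:ℝ)..s, (s - r) ^ (β - 1) * g r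
      = ∫ s, ∫ r, H (s, r) := by
    rw [intervalIntegral.integral_of_le ht.le, integral_Ioc_eq_integral_Ioo,
      ← setIntegral_eq_integral_of_forall_compl_eq_zero compl1]
    apply setIntegral_congr_fun measurableSet_Ioo
    intro s hs
    show (t - s) ^ (-β) * (∫ r in (0:ℝ)..s, (s - r) ^ (β - 1) * g r) = ∫ r, H (s, r)
    rw [show (fun r => H (s, r)) = _ from funext (slice1 s hs.1 hs.2),
      MeasureTheory.integral_indicator measurableSet_Ioo, MeasureTheory.integral_const_mul,
      ← integral_Ioc_eq_integral_Ioo, ← intervalIntegral.integral_of_le hs.1.le]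
  have swap := integral_integral_swap (f := fun s r => H (s, r)) hH_int
  have rhs_eq : (∫ r, ∫ s, H (s, r))
      = Real.Gamma β * Real.Gamma (1 - β) * ∫ r in (0:ℝ)..t, g r := by
    rw [← setIntegral_eq_integral_of_forall_compl_eq_zero compl2,
      intervalIntegral.integral_of_le ht.le, integral_Ioc_eq_integral_Ioo,
      ← MeasureTheory.integral_const_mul]
    apply setIntegral_congr_fun measurableSet_Ioo
    intro r hr
    show (∫ s, H (s, r)) = Real.Gamma β * Real.Gamma (1 - β) * g r
    rw [show (fun s => H (s, r)) = _ from funext (slice2 r hr.1 hr.2),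
      MeasureTheory.integral_indicator measurableSet_Ioo, MeasureTheory.integral_mul_const,
      ← integral_Ioc_eq_integral_Ioo, ← intervalIntegral.integral_of_le hr.2.le,
      inner_kernel hβ0 hβ1 hr.2]
  rw [lhs_eq]
  exact swap.trans rhs_eq

/-- The modified fractional integral
`J^p f(t) = (1/Γ(p)) ∫₀ᵗ (t−s)^{p−1} (f(s) − f(0)) ds`.
Note that `J^p f` takes the value `0` at `t = 0` (the continuous extension). -/
noncomputable def modInt (p : ℝ) (f : ℝ → ℝ) (t : ℝ) : ℝ :=
  (1 / Real.Gamma p) * ∫ s in (0:ℝ)..t, (t - s) ^ (p - 1) * (f s - f 0)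

lemma modInt_zero (p : ℝ) (f : ℝ → ℝ) : modInt p f 0 = 0 := by
  simp [modInt]

lemma modInt_repr {β : ℝ} (hβ0 : 0 < β) (hβ1 : β < 1) (f : ℝ → ℝ)
    (hf : Continuous f) {t : ℝ} (ht : 0 < t) :
    modInt (1 - β) (modInt β f) t = ∫ s in (0:ℝ)..t, (f s - f 0) := by
  have hΓβ : (0:ℝ) < Real.Gamma β := Real.Gamma_pos_of_pos hβ0
  have hΓβ' : (0:ℝ) < Real.Gamma (1 - β) := Real.Gamma_pos_of_pos (by linarith)
  have hg : Continuous (fun r => f r - f 0) := hf.sub continuous_const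
  have step : ∫ s in (0:ℝ)..t, (t - s) ^ (1 - β - 1) * (modInt β f s - modInt β f 0)
      = (1 / Real.Gamma β) *
        ∫ s in (0:ℝ)..t, (t - s) ^ (-β) * ∫ r in (0:ℝ)..s, (s - r) ^ (β - 1) * (f r - f 0) := by
    rw [← intervalIntegral.integral_const_mul]
    apply intervalIntegral.integral_congr
    intro s _
    dsimp only
    rw [modInt_zero, sub_zero, modInt, show (1:ℝ) - β - 1 = -β by ring]
    ring
  rw [modInt, step, fubini_key hβ0 hβ1 ht _ hg]
  field_simp

/-- For `β ∈ (0,1)` and `f` continuous on `[0,∞)`, the function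
`u = J^{1−β}(J^β f)` (with `J^β f` extended by `0` at `0`) is differentiable at every
`t > 0` with `u′(t) = f(t) − f(0)`, i.e. the Caputo-type derivative satisfies
`∂^β J^β f(t) = f(t) − f(0)`. -/
theorem caputo_deriv_modInt (β : ℝ) (hβ0 : 0 < β) (hβ1 : β < 1)
    (f : ℝ → ℝ) (hf : ContinuousOn f (Set.Ici 0)) :
    ∀ t > (0:ℝ),
      HasDerivAt (fun s => modInt (1 - β) (modInt β f) s) (f t - f 0) t := by
  intro t ht
  set F : ℝ → ℝ := fun x => f (max x 0) with hF_def
  have hFc : Continuous F :=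
    hf.comp_continuous (continuous_id.max continuous_const) (fun x => le_max_right x 0)
  have hF0 : F 0 = f 0 := by simp [hF_def]
  have hFx : ∀ x : ℝ, 0 ≤ x → F x = f x := by
    intro x hx
    simp [hF_def, max_eq_left hx]
  -- congruence lemma for modInt
  have modInt_congr : ∀ (p : ℝ) (u v : ℝ → ℝ) (s : ℝ), 0 ≤ s →
      (∀ x ∈ Icc 0 s, u x = v x) → modInt p u s = modInt p v s := by
    intro p u v s hs h
    unfold modInt
    congr 1
    apply intervalIntegral.integral_congr
    intro r hr
    rw [Set.uIcc_of_le hs] at hr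
    dsimp only
    rw [h r hr, h 0 ⟨le_rfl, hs⟩]
  have hsame : ∀ s : ℝ, 0 ≤ s → modInt β f s = modInt β F s := by
    intro s hs
    exact modInt_congr β f F s hs (fun x hx => (hFx x hx.1).symm)
  have hsame2 : ∀ s : ℝ, 0 ≤ s →
      modInt (1 - β) (modInt β f) s = modInt (1 - β) (modInt β F) s := by
    intro s hs
    exact modInt_congr (1 - β) _ _ s hs (fun σ hσ => hsame σ hσ.1)
  -- derivative of the primitive of F - F 0
  have hGc : Continuous (fun u => F u - F 0) := hFc.sub continuous_const
  have hD : HasDerivAt (fun x => ∫ u in (0:ℝ)..x, (F u - F 0)) (F t - F 0) t := by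
    exact intervalIntegral.integral_hasDerivAt_right
      (hGc.intervalIntegrable 0 t)
      (hGc.stronglyMeasurable.stronglyMeasurableAtFilter)
      hGc.continuousAt
  have hEq : (fun s => modInt (1 - β) (modInt β f) s)
      =ᶠ[nhds t] (fun x => ∫ u in (0:ℝ)..x, (F u - F 0)) := by
    filter_upwards [Ioi_mem_nhds ht] with s hs
    rw [hsame2 s (le_of_lt hs), modInt_repr hβ0 hβ1 F hFc hs]
  have := hD.congr_of_eventuallyEq hEq
  rwa [hF0, hFx t ht.le] at this
end

section
/- Let p > 0 and let f be continuous on [0, ∞) with |f(t)| ≤ M e^{ct} for some constants M, c and all t ≥ 0. Then for every real λ > max(c, 0), the Laplace transform of J^p f is defined and satisfies L[J^p f](λ) = λ^{−p} L[f](λ) − λ^{−p−1} f(0). -/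
open MeasureTheory Set Real Function

/-- The Laplace transform `L[f](λ) = ∫₀^∞ f(t) e^{−λt} dt`. -/
noncomputable def laplace (f : ℝ → ℝ) (l : ℝ) : ℝ :=
  ∫ t in Set.Ioi (0:ℝ), f t * Real.exp (-l * t)

/-- For `p > 0` and `f` continuous on `[0,∞)` of exponential order,
the Laplace transform of `J^p f` is defined for `λ > max(c, 0)` and satisfies
`L[J^p f](λ) = λ^{−p} L[f](λ) − λ^{−p−1} f(0)`. -/
theorem laplace_modInt (p : ℝ) (hp : 0 < p)
    (f : ℝ → ℝ) (hf : ContinuousOn f (Set.Ici 0))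
    (M c : ℝ) (hbd : ∀ t ≥ (0:ℝ), |f t| ≤ M * Real.exp (c * t)) :
    ∀ l > max c 0,
      MeasureTheory.IntegrableOn (fun t => modInt p f t * Real.exp (-l * t)) (Set.Ioi 0) ∧
      laplace (modInt p f) l = l ^ (-p) * laplace f l - l ^ (-p - 1) * f 0 := by
  intro l hl
  have hl0 : 0 < l := lt_of_le_of_lt (le_max_right c 0) hl
  have hlc : c < l := lt_of_le_of_lt (le_max_left c 0) hl
  set c0 : ℝ := max c 0 with hc0def
  have hc00 : 0 ≤ c0 := le_max_right c 0
  have hc0l : c0 < l := hl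
  have hM0 : |f 0| ≤ M := by simpa using hbd 0 le_rfl
  have hM : 0 ≤ M := (abs_nonneg _).trans hM0
  -- continuous extension of f to ℝ
  set ft : ℝ → ℝ := fun s => f (max s 0) with hftdef
  have hftc : Continuous ft :=
    hf.comp_continuous (continuous_id.max continuous_const)
      fun x => mem_Ici.2 (le_max_right _ _)
  have hfteq : ∀ s : ℝ, 0 ≤ s → ft s = f s := fun s hs => by
    simp [hftdef, max_eq_left hs]
  set g : ℝ → ℝ := fun s => ft s - f 0 with hgdef
  have hgc : Continuous g := hftc.sub continuous_const
  have hgbd : ∀ s : ℝ, |g s| ≤ 2 * M * Real.exp (c0 * s) := by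
    intro s
    rcases le_or_gt s 0 with h | h
    · have hz : g s = 0 := by simp [hgdef, hftdef, max_eq_right h]
      rw [hz, abs_zero]; positivity
    · have h1 : |f s| ≤ M * Real.exp (c * s) := hbd s h.le
      have h2 : Real.exp (c * s) ≤ Real.exp (c0 * s) :=
        Real.exp_le_exp.2 (mul_le_mul_of_nonneg_right (le_max_left _ _) h.le)
      have h4 : (1:ℝ) ≤ Real.exp (c0 * s) := by
        rw [← Real.exp_zero]; exact Real.exp_le_exp.2 (by positivity)
      have : |g s| ≤ |f s| + |f 0| := by
        have hgs : g s = f s - f 0 := by simp only [hgdef]; rw [hfteq s h.le]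
        rw [hgs]
        exact abs_sub _ _
      have hMs : M * Real.exp (c * s) ≤ M * Real.exp (c0 * s) :=
        mul_le_mul_of_nonneg_left h2 hM
      nlinarith [Real.exp_pos (c0 * s)]
  -- kernel and the two-variable function
  set K : ℝ → ℝ := fun u => u ^ (p - 1) * Real.exp (-(l * u)) with hKdef
  set Φ : ℝ → ℝ → ℝ := fun t s =>
    (Set.Ioo (0:ℝ) t).indicator (fun s => K (t - s) * (g s * Real.exp (-(l * s)))) s with hΦdef
  have hΦzero : ∀ t ≤ (0:ℝ), Φ t = 0 := by
    intro t ht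
    have : Set.Ioo (0:ℝ) t = ∅ := Set.Ioo_eq_empty (by intro h0; exact absurd (h0.trans_le ht) (lt_irrefl 0))
    funext s; simp [hΦdef, this]
  -- measurability
  have hFm : Measurable (fun q : ℝ × ℝ => K (q.1 - q.2) * (g q.2 * Real.exp (-(l * q.2)))) := by
    apply Measurable.mul
    · apply Measurable.mul
      · exact (measurable_fst.sub measurable_snd).pow measurable_const
      · exact (measurable_const.mul (measurable_fst.sub measurable_snd)).neg.exp
    · exact (hgc.measurable.comp measurable_snd).mul
        ((measurable_const.mul measurable_snd).neg.exp)
  have hS : MeasurableSet {q : ℝ × ℝ | 0 < q.2 ∧ q.2 < q.1} := by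
    apply MeasurableSet.inter
    · exact measurableSet_lt measurable_const measurable_snd
    · exact measurableSet_lt measurable_snd measurable_fst
  have huncurry : uncurry Φ = Set.indicator {q : ℝ × ℝ | 0 < q.2 ∧ q.2 < q.1}
      (fun q => K (q.1 - q.2) * (g q.2 * Real.exp (-(l * q.2)))) := by
    funext q
    simp only [uncurry, hΦdef, Set.indicator_apply, Set.mem_Ioo, Set.mem_setOf_eq]
  have hΦmeas : AEStronglyMeasurable (uncurry Φ) (volume.prod volume) := by
    rw [huncurry]
    exact (hFm.indicator hS).aestronglyMeasurable
  -- per-t integrability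
  have hdom : ∀ t : ℝ, 0 < t → IntegrableOn (fun s : ℝ => (t - s) ^ (p - 1)) (Set.Ioo 0 t) := by
    intro t ht
    have h1 : IntervalIntegrable (fun x : ℝ => x ^ (p - 1)) volume 0 t :=
      intervalIntegral.intervalIntegrable_rpow' (by linarith)
    have h2 : IntervalIntegrable (fun s : ℝ => (t - s) ^ (p - 1)) volume (t - 0) (t - t) :=
      h1.comp_sub_left t
    have h3 : IntervalIntegrable (fun s : ℝ => (t - s) ^ (p - 1)) volume 0 t := by
      simpa using h2.symm
    exact ((intervalIntegrable_iff_integrableOn_Ioo_of_le ht.le).1 h3)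
  have hptbd : ∀ t : ℝ, ∀ s ∈ Set.Ioo (0:ℝ) t,
      ‖K (t - s) * (g s * Real.exp (-(l * s)))‖ ≤
        2 * M * Real.exp ((c0 - l) * t) * (t - s) ^ (p - 1) := by
    intro t s hs
    have hts : 0 < t - s := by have := hs.2; linarith
    have hrp : (0:ℝ) ≤ (t - s) ^ (p - 1) := Real.rpow_nonneg hts.le _
    have hexp : Real.exp (-(l * (t - s))) * Real.exp (-(l * s)) = Real.exp (-(l * t)) := by
      rw [← Real.exp_add]; ring_nf
    have heq : K (t - s) * (g s * Real.exp (-(l * s)))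
        = (t - s) ^ (p - 1) * g s * Real.exp (-(l * t)) := by
      rw [hKdef]
      calc (t - s) ^ (p - 1) * Real.exp (-(l * (t - s))) * (g s * Real.exp (-(l * s)))
          = (t - s) ^ (p - 1) * g s * (Real.exp (-(l * (t - s))) * Real.exp (-(l * s))) := by ring
        _ = (t - s) ^ (p - 1) * g s * Real.exp (-(l * t)) := by rw [hexp]
    rw [heq]
    have h1 : |g s| ≤ 2 * M * Real.exp (c0 * t) := by
      refine (hgbd s).trans ?_
      have : Real.exp (c0 * s) ≤ Real.exp (c0 * t) :=
        Real.exp_le_exp.2 (mul_le_mul_of_nonneg_left hs.2.le hc00)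
      nlinarith
    have hexp2 : Real.exp (c0 * t) * Real.exp (-(l * t)) = Real.exp ((c0 - l) * t) := by
      rw [← Real.exp_add]; ring_nf
    rw [Real.norm_eq_abs, abs_mul, abs_mul, abs_of_nonneg hrp, Real.abs_exp]
    calc (t - s) ^ (p - 1) * |g s| * Real.exp (-(l * t))
        ≤ (t - s) ^ (p - 1) * (2 * M * Real.exp (c0 * t)) * Real.exp (-(l * t)) := by
          apply mul_le_mul_of_nonneg_right _ (Real.exp_pos _).le
          exact mul_le_mul_of_nonneg_left h1 hrp
      _ = 2 * M * Real.exp ((c0 - l) * t) * (t - s) ^ (p - 1) := by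
          rw [← hexp2]; ring
  have hst : ∀ t : ℝ, Integrable (Φ t) := by
    intro t
    rcases le_or_gt t 0 with h | h
    · rw [hΦzero t h]; exact integrable_zero _ _ _
    · rw [hΦdef]
      simp only
      rw [integrable_indicator_iff measurableSet_Ioo]
      apply Integrable.mono' ((hdom t h).const_mul (2 * M * Real.exp ((c0 - l) * t)))
      · exact ((hFm.comp (measurable_const.prodMk measurable_id)).aestronglyMeasurable).restrict
      · filter_upwards [self_mem_ae_restrict measurableSet_Ioo] with s hs
        exact hptbd t s hs
  -- value of the inner beta-type integral
  have hIoo_val : ∀ t : ℝ, 0 < t → ∫ s in Set.Ioo (0:ℝ) t, (t - s) ^ (p - 1) = t ^ p / p := by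
    intro t ht
    rw [← MeasureTheory.integral_Ioc_eq_integral_Ioo, ← intervalIntegral.integral_of_le ht.le]
    rw [intervalIntegral.integral_comp_sub_left (fun u : ℝ => u ^ (p - 1)) t]
    simp only [sub_zero, sub_self]
    rw [integral_rpow (Or.inl (by linarith : (-1:ℝ) < p - 1))]
    have hpe : p - 1 + 1 = p := by ring
    rw [hpe, Real.zero_rpow (ne_of_gt hp)]
    ring
  -- bound for the iterated norm integral
  set B : ℝ → ℝ :=
    Set.indicator (Set.Ioi 0) (fun t => 2 * M / p * (t ^ p * Real.exp ((c0 - l) * t))) with hBdef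
  have h_norm_bound : ∀ t : ℝ, (∫ s, ‖Φ t s‖) ≤ B t := by
    intro t
    rcases le_or_gt t 0 with h | h
    · have hB0 : B t = 0 := by
        rw [hBdef]
        exact Set.indicator_of_notMem (by simpa using h) _
      rw [hΦzero t h, hB0]
      simp
    · have hBt : B t = 2 * M / p * (t ^ p * Real.exp ((c0 - l) * t)) := by
        rw [hBdef]
        exact Set.indicator_of_mem (Set.mem_Ioi.2 h) _
      have h1 : (fun s => ‖Φ t s‖) = Set.indicator (Set.Ioo (0:ℝ) t)
          (fun s => ‖K (t - s) * (g s * Real.exp (-(l * s)))‖) := by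
        funext s
        simp only [hΦdef]
        exact norm_indicator_eq_indicator_norm _ s
      have h2 : IntegrableOn (fun s => K (t - s) * (g s * Real.exp (-(l * s))))
          (Set.Ioo (0:ℝ) t) := by
        have h3 := hst t
        simp only [hΦdef] at h3
        exact (integrable_indicator_iff measurableSet_Ioo).1 h3
      rw [h1, integral_indicator measurableSet_Ioo]
      calc ∫ s in Set.Ioo (0:ℝ) t, ‖K (t - s) * (g s * Real.exp (-(l * s)))‖
          ≤ ∫ s in Set.Ioo (0:ℝ) t, 2 * M * Real.exp ((c0 - l) * t) * (t - s) ^ (p - 1) :=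
            setIntegral_mono_on h2.norm ((hdom t h).const_mul _) measurableSet_Ioo (hptbd t)
        _ = 2 * M * Real.exp ((c0 - l) * t) * (t ^ p / p) := by
            rw [integral_const_mul, hIoo_val t h]
        _ = B t := by rw [hBt]; field_simp
  have hB_int : Integrable B := by
    rw [hBdef, integrable_indicator_iff measurableSet_Ioi]
    have h1 : IntegrableOn (fun x : ℝ => x ^ p * Real.exp (-(l - c0) * x)) (Set.Ioi 0) := by
      have := integrableOn_rpow_mul_exp_neg_mul_rpow (by linarith : (-1:ℝ) < p) (zero_lt_one : (0:ℝ) < 1)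
        (by linarith : (0:ℝ) < l - c0)
      simpa [Real.rpow_one] using this
    have h2 : IntegrableOn (fun x : ℝ => 2 * M / p * (x ^ p * Real.exp (-(l - c0) * x)))
        (Set.Ioi 0) := h1.const_mul (2 * M / p)
    refine h2.congr_fun (fun x _ => ?_) measurableSet_Ioi
    have : -(l - c0) * x = (c0 - l) * x := by ring
    simp only [this]
  have h_norm_meas : AEStronglyMeasurable (fun t => ∫ s, ‖Φ t s‖) volume :=
    (hΦmeas.norm).integral_prod_right'
  have h_norm_int : Integrable (fun t => ∫ s, ‖Φ t s‖) := by
    apply Integrable.mono' hB_int h_norm_meas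
    filter_upwards with t
    rw [Real.norm_eq_abs, abs_of_nonneg (integral_nonneg fun s => norm_nonneg _)]
    exact h_norm_bound t
  have hΦint : Integrable (uncurry Φ) (volume.prod volume) :=
    (integrable_prod_iff hΦmeas).2 ⟨Filter.Eventually.of_forall hst, h_norm_int⟩
  have hIprod : Integrable (fun t => ∫ s, Φ t s) volume := hΦint.integral_prod_left
  -- value of the kernel integral
  have hIK : ∫ u in Set.Ioi (0:ℝ), K u = (1 / l) ^ p * Real.Gamma p := by
    simp only [hKdef]
    exact Real.integral_rpow_mul_exp_neg_mul_Ioi hp hl0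
  -- inner t-integral
  have hinner : ∀ s : ℝ, (∫ t, Φ t s)
      = Set.indicator (Set.Ioi 0)
          (fun s => (∫ u in Set.Ioi (0:ℝ), K u) * (g s * Real.exp (-(l * s)))) s := by
    intro s
    rcases le_or_gt s 0 with h | h
    · have hz : ∀ t, Φ t s = 0 := by
        intro t
        simp only [hΦdef]
        exact Set.indicator_of_notMem (fun hs => absurd hs.1 (not_lt.2 h)) _
      rw [Set.indicator_of_notMem (by simpa using h)]
      simp [hz]
    · have hrw : ∀ t : ℝ, Φ t s
          = Set.indicator (Set.Ioi 0) K (t - s) * (g s * Real.exp (-(l * s))) := by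
        intro t
        simp only [hΦdef]
        by_cases ht : s < t
        · rw [Set.indicator_of_mem (Set.mem_Ioo.2 ⟨h, ht⟩),
            Set.indicator_of_mem (Set.mem_Ioi.2 (by linarith))]
        · rw [Set.indicator_of_notMem (fun hs => ht (Set.mem_Ioo.1 hs).2),
            Set.indicator_of_notMem (fun hu => ht (by have := Set.mem_Ioi.1 hu; linarith)),
            zero_mul]
      rw [Set.indicator_of_mem (Set.mem_Ioi.2 h)]
      calc (∫ t, Φ t s)
          = ∫ t, Set.indicator (Set.Ioi 0) K (t - s) * (g s * Real.exp (-(l * s))) :=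
            integral_congr_ae (Filter.Eventually.of_forall hrw)
        _ = (∫ t, Set.indicator (Set.Ioi 0) K (t - s)) * (g s * Real.exp (-(l * s))) :=
            integral_mul_const _ _
        _ = (∫ t, Set.indicator (Set.Ioi 0) K t) * (g s * Real.exp (-(l * s))) := by
            rw [integral_sub_right_eq_self (fun t => Set.indicator (Set.Ioi 0) K t) s]
        _ = (∫ u in Set.Ioi (0:ℝ), K u) * (g s * Real.exp (-(l * s))) := by
            rw [integral_indicator measurableSet_Ioi]
  -- Laplace transform of f : integrability and the constant integral
  have hexp_int : IntegrableOn (fun s : ℝ => Real.exp (-(l * s))) (Set.Ioi 0) := by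
    simpa [neg_mul] using exp_neg_integrableOn_Ioi 0 hl0
  have hexp_val : ∫ s in Set.Ioi (0:ℝ), Real.exp (-(l * s)) = 1 / l := by
    have h := Real.integral_rpow_mul_exp_neg_mul_Ioi zero_lt_one hl0
    simp only [sub_self, Real.rpow_zero, one_mul, Real.rpow_one, Real.Gamma_one, mul_one] at h
    exact h
  have hIf : IntegrableOn (fun s : ℝ => f s * Real.exp (-(l * s))) (Set.Ioi 0) := by
    have h1 : IntegrableOn (fun s : ℝ => ft s * Real.exp (-(l * s))) (Set.Ioi 0) := by
      apply Integrable.mono' (g := fun s => M * Real.exp ((c - l) * s)) ?_ ?_ ?_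
      · have h0 : IntegrableOn (fun x : ℝ => Real.exp (-(l - c) * x)) (Set.Ioi 0) :=
          exp_neg_integrableOn_Ioi 0 (by linarith : (0:ℝ) < l - c)
        have h1 : IntegrableOn (fun x : ℝ => M * Real.exp (-(l - c) * x)) (Set.Ioi 0) :=
          h0.const_mul M
        refine h1.congr_fun (fun x _ => ?_) measurableSet_Ioi
        have he : -(l - c) * x = (c - l) * x := by ring
        simp only [he]
      · exact ((hftc.mul (Real.continuous_exp.comp
          ((continuous_const.mul continuous_id).neg))).aestronglyMeasurable).restrict
      · filter_upwards [self_mem_ae_restrict measurableSet_Ioi] with s hs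
        have hs0 : (0:ℝ) < s := hs
        rw [Real.norm_eq_abs, abs_mul, Real.abs_exp, hfteq s hs0.le]
        calc |f s| * Real.exp (-(l * s)) ≤ (M * Real.exp (c * s)) * Real.exp (-(l * s)) :=
              mul_le_mul_of_nonneg_right (hbd s hs0.le) (Real.exp_pos _).le
          _ = M * Real.exp ((c - l) * s) := by
              rw [mul_assoc, ← Real.exp_add]
              congr 1
              ring
    refine h1.congr_fun (fun s hs => ?_) measurableSet_Ioi
    simp only [hfteq s (le_of_lt hs)]
  have hg_int : IntegrableOn (fun s : ℝ => g s * Real.exp (-(l * s))) (Set.Ioi 0) := by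
    have h1 : IntegrableOn
        (fun s : ℝ => f s * Real.exp (-(l * s)) - f 0 * Real.exp (-(l * s)))
        (Set.Ioi 0) := hIf.sub (hexp_int.const_mul (f 0))
    refine h1.congr_fun (fun s hs => ?_) measurableSet_Ioi
    have hgs : g s = f s - f 0 := by simp only [hgdef]; rw [hfteq s (le_of_lt hs)]
    simp only [hgs]
    ring
  have hg_val : ∫ s in Set.Ioi (0:ℝ), g s * Real.exp (-(l * s))
      = laplace f l - f 0 * (1 / l) := by
    have h1 : ∫ s in Set.Ioi (0:ℝ), g s * Real.exp (-(l * s))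
        = ∫ s in Set.Ioi (0:ℝ), (f s * Real.exp (-(l * s)) - f 0 * Real.exp (-(l * s))) := by
      refine setIntegral_congr_fun measurableSet_Ioi fun s hs => ?_
      have hgs : g s = f s - f 0 := by simp only [hgdef]; rw [hfteq s (le_of_lt hs)]
      rw [hgs]; ring
    rw [h1, integral_sub hIf (hexp_int.const_mul (f 0)), integral_const_mul, hexp_val]
    unfold laplace
    simp only [neg_mul]
  -- connection with modInt
  have hcon : ∀ t ∈ Set.Ioi (0:ℝ),
      modInt p f t * Real.exp (-(l * t)) = (1 / Real.Gamma p) * ∫ s, Φ t s := by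
    intro t ht
    have ht0 : (0:ℝ) < t := ht
    have h1 : (∫ s, Φ t s)
        = ∫ s in Set.Ioo (0:ℝ) t, K (t - s) * (g s * Real.exp (-(l * s))) := by
      simp only [hΦdef]
      exact integral_indicator measurableSet_Ioo
    have h2 : ∀ s ∈ Set.Ioo (0:ℝ) t, K (t - s) * (g s * Real.exp (-(l * s)))
        = ((t - s) ^ (p - 1) * (f s - f 0)) * Real.exp (-(l * t)) := by
      intro s hs
      have hgs : g s = f s - f 0 := by simp only [hgdef]; rw [hfteq s hs.1.le]
      have hexp : Real.exp (-(l * (t - s))) * Real.exp (-(l * s)) = Real.exp (-(l * t)) := by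
        rw [← Real.exp_add]; ring_nf
      simp only [hKdef, hgs]
      rw [← hexp]; ring
    have h3 : (∫ s, Φ t s)
        = (∫ s in Set.Ioo (0:ℝ) t, (t - s) ^ (p - 1) * (f s - f 0)) * Real.exp (-(l * t)) := by
      rw [h1, setIntegral_congr_fun measurableSet_Ioo h2, integral_mul_const]
    have h4 : (∫ s in (0:ℝ)..t, (t - s) ^ (p - 1) * (f s - f 0))
        = ∫ s in Set.Ioo (0:ℝ) t, (t - s) ^ (p - 1) * (f s - f 0) := by
      rw [intervalIntegral.integral_of_le ht0.le, MeasureTheory.integral_Ioc_eq_integral_Ioo]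
    rw [h3]
    unfold modInt
    rw [h4]
    ring
  -- Part 1 : integrability
  have hpart1 : IntegrableOn (fun t => modInt p f t * Real.exp (-l * t)) (Set.Ioi 0) := by
    have h1 : IntegrableOn (fun t => (1 / Real.Gamma p) * ∫ s, Φ t s) (Set.Ioi 0) :=
      (hIprod.const_mul _).integrableOn
    refine h1.congr_fun (fun t ht => ?_) measurableSet_Ioi
    rw [neg_mul]
    exact (hcon t ht).symm
  refine ⟨hpart1, ?_⟩
  -- Part 2 : the value
  have hval : laplace (modInt p f) l
      = (1 / Real.Gamma p) * ((1 / l) ^ p * Real.Gamma p * (laplace f l - f 0 * (1 / l))) := by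
    unfold laplace
    calc ∫ t in Set.Ioi (0:ℝ), modInt p f t * Real.exp (-l * t)
        = ∫ t in Set.Ioi (0:ℝ), (1 / Real.Gamma p) * ∫ s, Φ t s := by
          refine setIntegral_congr_fun measurableSet_Ioi fun t ht => ?_
          rw [neg_mul]
          exact hcon t ht
      _ = ∫ t, (1 / Real.Gamma p) * ∫ s, Φ t s := by
          apply setIntegral_eq_integral_of_forall_compl_eq_zero
          intro t ht
          have h : t ≤ 0 := by simpa using ht
          rw [hΦzero t h]
          simp
      _ = (1 / Real.Gamma p) * ∫ t, ∫ s, Φ t s := integral_const_mul _ _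
      _ = (1 / Real.Gamma p) * ∫ s, ∫ t, Φ t s := by rw [integral_integral_swap hΦint]
      _ = (1 / Real.Gamma p) * ∫ s, Set.indicator (Set.Ioi 0)
            (fun s => (∫ u in Set.Ioi (0:ℝ), K u) * (g s * Real.exp (-(l * s)))) s := by
          congr 1
          exact integral_congr_ae (Filter.Eventually.of_forall hinner)
      _ = (1 / Real.Gamma p) * ((∫ u in Set.Ioi (0:ℝ), K u)
            * ∫ s in Set.Ioi (0:ℝ), g s * Real.exp (-(l * s))) := by
          rw [integral_indicator measurableSet_Ioi, integral_const_mul]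
      _ = (1 / Real.Gamma p) * ((1 / l) ^ p * Real.Gamma p * (laplace f l - f 0 * (1 / l))) := by
          rw [hIK, hg_val]
  have hΓ : Real.Gamma p ≠ 0 := (Real.Gamma_pos_of_pos hp).ne'
  have h1l : (1 / l : ℝ) ^ p = l ^ (-p) := by
    rw [Real.rpow_neg hl0.le, one_div, Real.inv_rpow hl0.le]
  have hlp1 : l ^ (-p - 1) = l ^ (-p) * (1 / l) := by
    have : (-p - 1 : ℝ) = -p - 1 := rfl
    rw [Real.rpow_sub hl0, Real.rpow_one]
    ring
  rw [hval, h1l, hlp1]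
  field_simp
end

section
/- Let β ∈ (0,1) and let f be continuous on [0, ∞) with |f(t)| ≤ M e^{ct} for some constants M, c and all t ≥ 0. Assume that J^{1−β} f is differentiable on (0, ∞), so that ∂^β f(t) = (d/dt) J^{1−β} f(t) exists for t > 0, and that ∂^β f is locally integrable and of exponential order. Then for every sufficiently large real λ, L[∂^β f](λ) = λ^{β} L[f](λ) − λ^{β−1} f(0). -/
open MeasureTheory Real Set Filter

lemma aux_shift (h : ℝ → ℝ) (s : ℝ) :
    ∫ t in Set.Ioi s, h (t - s) = ∫ u in Set.Ioi (0:ℝ), h u := by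
  have hemb : MeasurableEmbedding (fun x : ℝ => x + s) :=
    (Homeomorph.addRight s).measurableEmbedding
  have hmp : MeasurePreserving (fun x : ℝ => x + s) volume volume :=
    measurePreserving_add_right volume s
  have := hmp.setIntegral_preimage_emb hemb (fun y => h (y - s)) (Ioi s)
  have hpre : (fun x : ℝ => x + s) ⁻¹' (Ioi s) = Ioi 0 := by
    ext x; simp [Set.mem_preimage]
  rw [hpre] at this
  simpa using this.symm

lemma aux_gamma {β : ℝ} (hβ1 : β < 1) {l : ℝ} (hl : 0 < l) :
    ∫ t in Set.Ioi (0:ℝ), t ^ (-β) * Real.exp (-l * t) = (1/l) ^ (1-β) * Real.Gamma (1-β) := by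
  have := Real.integral_rpow_mul_exp_neg_mul_Ioi (a := 1 - β) (r := l) (by linarith) hl
  simpa [show (1:ℝ) - β - 1 = -β by ring, neg_mul] using this

lemma aux_gamma_int {β : ℝ} (hβ1 : β < 1) {l : ℝ} (hl : 0 < l) :
    IntegrableOn (fun t : ℝ => t ^ (-β) * Real.exp (-l * t)) (Set.Ioi 0) := by
  have := integrableOn_rpow_mul_exp_neg_mul_rpow (s := -β) (p := 1) (b := l) (by linarith) one_pos hl
  simpa using this

lemma exp_order_integrable {h : ℝ → ℝ}
    (hm : MeasureTheory.AEStronglyMeasurable h (MeasureTheory.volume.restrict (Set.Ioi 0)))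
    {A a l : ℝ} (hb : ∀ t > (0:ℝ), |h t| ≤ A * Real.exp (a * t)) (hl : a < l) :
    MeasureTheory.IntegrableOn (fun t => h t * Real.exp (-l * t)) (Set.Ioi 0) := by
  have hdom : MeasureTheory.IntegrableOn (fun t : ℝ => A * Real.exp (-(l - a) * t)) (Set.Ioi 0) :=
    (exp_neg_integrableOn_Ioi 0 (by linarith)).const_mul A
  refine hdom.mono' (hm.mul (Continuous.aestronglyMeasurable (by fun_prop))) ?_
  rw [ae_restrict_iff' measurableSet_Ioi]
  filter_upwards with t ht
  have h1 : |h t| ≤ A * Real.exp (a * t) := hb t ht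
  have h2 : (0:ℝ) < Real.exp (-l * t) := Real.exp_pos _
  calc ‖h t * Real.exp (-l * t)‖ = |h t| * Real.exp (-l * t) := by
        rw [norm_mul, Real.norm_eq_abs, Real.norm_eq_abs, abs_of_pos h2]
    _ ≤ (A * Real.exp (a * t)) * Real.exp (-l * t) := by
        exact mul_le_mul_of_nonneg_right h1 h2.le
    _ = A * Real.exp (-(l - a) * t) := by
        rw [mul_assoc, ← Real.exp_add]; ring_nf

/-- For `β ∈ (0,1)` and `f` continuous on `[0,∞)` of exponential order, if the
Caputo-type derivative `∂^β f(t) = (d/dt) J^{1−β} f(t)` exists for `t > 0` and is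
locally integrable and of exponential order, then for all sufficiently large
real `λ`, `L[∂^β f](λ) = λ^β L[f](λ) − λ^{β−1} f(0)`. -/
theorem laplace_caputo_deriv (β : ℝ) (hβ0 : 0 < β) (hβ1 : β < 1)
    (f Df : ℝ → ℝ) (hf : ContinuousOn f (Set.Ici 0))
    (M c : ℝ) (hbd : ∀ t ≥ (0:ℝ), |f t| ≤ M * Real.exp (c * t))
    (hD : ∀ t > (0:ℝ), HasDerivAt (fun s => modInt (1 - β) f s) (Df t) t)
    (hloc : MeasureTheory.LocallyIntegrableOn Df (Set.Ioi 0))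
    (M' c' : ℝ) (hDbd : ∀ t > (0:ℝ), |Df t| ≤ M' * Real.exp (c' * t)) :
    ∃ l₀ : ℝ, ∀ l > l₀, laplace Df l = l ^ β * laplace f l - l ^ (β - 1) * f 0 := by
  classical
  have hβ' : (0:ℝ) < 1 - β := by linarith
  have hΓpos : 0 < Real.Gamma (1 - β) := Real.Gamma_pos_of_pos hβ'
  -- continuous extension of f
  set F : ℝ → ℝ := fun s => f (max s 0) with hFdef
  have hFcont : Continuous F :=
    hf.comp_continuous (continuous_id.max continuous_const) fun x => mem_Ici.2 (le_max_right _ _)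
  have hFeq : ∀ s : ℝ, 0 ≤ s → F s = f s := fun s hs => by
    simp only [hFdef]; rw [max_eq_left hs]
  have hF0 : F 0 = f 0 := hFeq 0 le_rfl
  have hM0 : 0 ≤ M := by
    have h := hbd 0 le_rfl
    simp at h
    exact le_trans (abs_nonneg _) h
  set cp := max c 0 with hcp
  have hcp0 : 0 ≤ cp := le_max_right _ _
  have hFbd : ∀ s : ℝ, 0 ≤ s → |F s| ≤ M * Real.exp (cp * s) := by
    intro s hs
    rw [hFeq s hs]
    refine (hbd s hs).trans ?_
    have : Real.exp (c * s) ≤ Real.exp (cp * s) :=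
      Real.exp_le_exp.2 (mul_le_mul_of_nonneg_right (le_max_left _ _) hs)
    exact mul_le_mul_of_nonneg_left this hM0
  -- the fractional integral of F
  set g : ℝ → ℝ := fun t => modInt (1 - β) F t with hgdef
  set I : ℝ → ℝ := fun t => ∫ s in (0:ℝ)..t, (t - s) ^ (-β) * (F s - F 0) with hIdef
  have hgI : ∀ t, g t = (1 / Real.Gamma (1 - β)) * I t := by
    intro t
    simp only [hgdef, modInt, hIdef, show (1:ℝ) - β - 1 = -β by ring]
  have hg0 : g 0 = 0 := by simp [hgI, hIdef]
  have hmodeq : ∀ t : ℝ, 0 ≤ t → g t = modInt (1 - β) f t := by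
    intro t ht
    simp only [hgdef, modInt]
    congr 1
    refine intervalIntegral.integral_congr fun s hs => ?_
    rw [uIcc_of_le ht] at hs
    rw [hFeq s hs.1, hF0]
  have hgD : ∀ t : ℝ, 0 < t → HasDerivAt g (Df t) t := by
    intro t ht
    refine (hD t ht).congr_of_eventuallyEq ?_
    filter_upwards [eventually_gt_nhds ht] with s hs
    exact hmodeq s hs.le
  -- kernel integrability
  have hrpowker : ∀ t : ℝ, IntegrableOn (fun s : ℝ => (t - s) ^ (-β)) (Ioo 0 t) := by
    intro t
    have h1 : IntervalIntegrable (fun x : ℝ => x ^ (-β)) volume 0 t :=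
      intervalIntegral.intervalIntegrable_rpow' (by linarith)
    have h2 := h1.comp_sub_left t
    simp only [sub_zero, sub_self] at h2
    have h3 : IntervalIntegrable (fun x : ℝ => (t - x) ^ (-β)) volume 0 t := h2.symm
    rcases le_or_gt t 0 with h | h
    · simp [Set.Ioo_eq_empty_of_le h]
    · have := (intervalIntegrable_iff_integrableOn_Ioo_of_le h.le).1 h3
      exact this
  have hker : ∀ t : ℝ, IntegrableOn (fun s => (t - s) ^ (-β) * (F s - F 0)) (Ioo 0 t) := by
    intro t
    rcases le_or_gt t 0 with h | h
    · simp [Set.Ioo_eq_empty_of_le h]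
    · have hIcc : IntegrableOn (fun s : ℝ => (t - s) ^ (-β)) (Icc 0 t) :=
        (integrableOn_Icc_iff_integrableOn_Ioo).2 (hrpowker t)
      have hFc : ContinuousOn (fun s : ℝ => F s - F 0) (Icc 0 t) :=
        (hFcont.sub continuous_const).continuousOn
      have := hIcc.mul_continuousOn hFc isCompact_Icc
      exact this.mono_set Ioo_subset_Icc_self
  -- bound on I
  have hrpow_int : ∀ t : ℝ, 0 < t →
      ∫ s in Ioo (0:ℝ) t, (t - s) ^ (-β) = t ^ (1 - β) / (1 - β) := by
    intro t ht
    rw [← integral_Ioc_eq_integral_Ioo, ← intervalIntegral.integral_of_le ht.le,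
      intervalIntegral.integral_comp_sub_left (fun x : ℝ => x ^ (-β)) t]
    simp only [sub_self, sub_zero]
    rw [integral_rpow (Or.inl (by linarith))]
    rw [Real.zero_rpow (by linarith : -β + 1 ≠ 0)]
    ring_nf
  have habs_bd : ∀ t : ℝ, 0 < t →
      (∫ s in Ioo (0:ℝ) t, |(t - s) ^ (-β) * (F s - F 0)|)
        ≤ 2 * M * Real.exp (cp * t) * (t ^ (1 - β) / (1 - β)) := by
    intro t ht
    have hle : ∀ s ∈ Ioo (0:ℝ) t, |(t - s) ^ (-β) * (F s - F 0)|
        ≤ (t - s) ^ (-β) * (2 * M * Real.exp (cp * t)) := by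
      intro s hs
      rw [abs_mul, abs_of_nonneg (Real.rpow_nonneg (by linarith [hs.2] : (0:ℝ) ≤ t - s) _)]
      refine mul_le_mul_of_nonneg_left ?_ (Real.rpow_nonneg (by linarith [hs.2]) _)
      have h1 : |F s| ≤ M * Real.exp (cp * t) := by
        refine (hFbd s hs.1.le).trans ?_
        exact mul_le_mul_of_nonneg_left
          (Real.exp_le_exp.2 (mul_le_mul_of_nonneg_left hs.2.le hcp0)) hM0
      have h2 : |F 0| ≤ M * Real.exp (cp * t) := by
        refine (hFbd 0 le_rfl).trans ?_
        simp only [mul_zero, Real.exp_zero, mul_one]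
        nlinarith [Real.one_le_exp (mul_nonneg hcp0 ht.le)]
      calc |F s - F 0| ≤ |F s| + |F 0| := abs_sub _ _
        _ ≤ 2 * M * Real.exp (cp * t) := by nlinarith
    calc (∫ s in Ioo (0:ℝ) t, |(t - s) ^ (-β) * (F s - F 0)|)
        ≤ ∫ s in Ioo (0:ℝ) t, (t - s) ^ (-β) * (2 * M * Real.exp (cp * t)) := by
          refine setIntegral_mono_on ((hker t).abs) ?_ measurableSet_Ioo hle
          exact (hrpowker t).mul_const _
      _ = (∫ s in Ioo (0:ℝ) t, (t - s) ^ (-β)) * (2 * M * Real.exp (cp * t)) := by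
          rw [integral_mul_const]
      _ = 2 * M * Real.exp (cp * t) * (t ^ (1 - β) / (1 - β)) := by
          rw [hrpow_int t ht]; ring
  have hIbd : ∀ t : ℝ, 0 ≤ t →
      |I t| ≤ 2 * M * Real.exp (cp * t) * (t ^ (1 - β) / (1 - β)) := by
    intro t ht
    rcases eq_or_lt_of_le ht with h0 | h0
    · simp only [hIdef, ← h0]
      simp [Real.zero_rpow hβ'.ne']
    · have h1 : |I t| ≤ ∫ s in (0:ℝ)..t, |(t - s) ^ (-β) * (F s - F 0)| := by
        simpa only [hIdef] using intervalIntegral.abs_integral_le_integral_abs h0.le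
      refine h1.trans ?_
      rw [intervalIntegral.integral_of_le h0.le, integral_Ioc_eq_integral_Ioo]
      exact habs_bd t h0
  set C := 2 * M / ((1 - β) * Real.Gamma (1 - β)) with hC
  have hC0 : 0 ≤ C := by positivity
  have hgbd : ∀ t : ℝ, 0 ≤ t → |g t| ≤ C * (t ^ (1 - β) * Real.exp (cp * t)) := by
    intro t ht
    rw [hgI]
    rw [abs_mul, abs_of_nonneg (by positivity : (0:ℝ) ≤ 1 / Real.Gamma (1 - β))]
    calc 1 / Real.Gamma (1 - β) * |I t|
        ≤ 1 / Real.Gamma (1 - β) * (2 * M * Real.exp (cp * t) * (t ^ (1 - β) / (1 - β))) := by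
          exact mul_le_mul_of_nonneg_left (hIbd t ht) (by positivity)
      _ = C * (t ^ (1 - β) * Real.exp (cp * t)) := by
          rw [hC]; field_simp
  have hrpow_exp : ∀ t : ℝ, 0 ≤ t → t ^ (1 - β) ≤ Real.exp t := by
    intro t ht
    rcases le_or_gt t 1 with h1 | h1
    · calc t ^ (1 - β) ≤ 1 := Real.rpow_le_one ht h1 hβ'.le
        _ ≤ Real.exp t := by
          rw [show (1:ℝ) = Real.exp 0 by simp]
          exact Real.exp_le_exp.2 ht
    · calc t ^ (1 - β) ≤ t ^ (1:ℝ) := Real.rpow_le_rpow_of_exponent_le h1.le (by linarith)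
        _ = t := Real.rpow_one t
        _ ≤ Real.exp t := (Real.add_one_le_exp t).trans' (by linarith)
  have hgbd' : ∀ t : ℝ, 0 ≤ t → |g t| ≤ C * Real.exp ((cp + 1) * t) := by
    intro t ht
    refine (hgbd t ht).trans ?_
    have : t ^ (1 - β) * Real.exp (cp * t) ≤ Real.exp t * Real.exp (cp * t) :=
      mul_le_mul_of_nonneg_right (hrpow_exp t ht) (Real.exp_nonneg _)
    refine (mul_le_mul_of_nonneg_left this hC0).trans ?_
    rw [← Real.exp_add]
    apply le_of_eq
    ring_nf
  -- continuity of g on [0,∞)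
  have hgcont : ContinuousOn g (Ici 0) := by
    intro x hx
    rcases eq_or_lt_of_le (mem_Ici.1 hx) with h0 | h0
    · -- continuity at 0 from the bound
      rw [ContinuousWithinAt, ← h0, hg0]
      have hb : Tendsto (fun t => C * (t ^ (1 - β) * Real.exp (cp * t))) (nhdsWithin 0 (Ici 0)) (nhds 0) := by
        have h1 : Tendsto (fun t : ℝ => t ^ (1 - β)) (nhdsWithin 0 (Ici 0)) (nhds 0) := by
          have := (Real.continuousAt_rpow_const 0 (1 - β) (Or.inr hβ'.le))
          have h2 := this.continuousWithinAt (s := Ici (0:ℝ))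
          rw [ContinuousWithinAt] at h2
          simpa [Real.zero_rpow hβ'.ne'] using h2
        have h2 : Tendsto (fun t : ℝ => Real.exp (cp * t)) (nhdsWithin 0 (Ici 0)) (nhds 1) := by
          have : ContinuousAt (fun t : ℝ => Real.exp (cp * t)) 0 := by fun_prop
          have h2 := this.continuousWithinAt (s := Ici (0:ℝ))
          rw [ContinuousWithinAt] at h2
          simpa using h2
        have := (h1.mul h2).const_mul C
        simpa using this
      refine squeeze_zero_norm' ?_ hb
      filter_upwards [self_mem_nhdsWithin] with t ht
      exact hgbd t ht
    · exact ((hgD x h0).continuousAt).continuousWithinAt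
  -- measurability
  have hDm : AEStronglyMeasurable Df (volume.restrict (Ioi 0)) :=
    hloc.aestronglyMeasurable
  have hgm : AEStronglyMeasurable g (volume.restrict (Ioi 0)) :=
    ((hgcont.mono Ioi_subset_Ici_self).aestronglyMeasurable measurableSet_Ioi)
  refine ⟨max (max (cp + 1) c') 0, fun l hl => ?_⟩
  have hl0 : (0:ℝ) < l := lt_of_le_of_lt (le_max_right _ _) hl
  have hlc' : c' < l := lt_of_le_of_lt ((le_max_right _ _).trans (le_max_left _ _)) hl
  have hlcp1 : cp + 1 < l := lt_of_le_of_lt ((le_max_left _ _).trans (le_max_left _ _)) hl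
  have hlcp : cp < l := by linarith
  -- integrability on Ioi 0
  have intDf : IntegrableOn (fun t => Df t * Real.exp (-l * t)) (Ioi 0) :=
    exp_order_integrable hDm hDbd hlc'
  have intg : IntegrableOn (fun t => g t * Real.exp (-l * t)) (Ioi 0) :=
    exp_order_integrable hgm (fun t ht => hgbd' t ht.le) hlcp1
  have intF : IntegrableOn (fun t => F t * Real.exp (-l * t)) (Ioi 0) :=
    exp_order_integrable (hFcont.aestronglyMeasurable.restrict)
      (fun t ht => hFbd t ht.le) hlcp
  have intone : IntegrableOn (fun t : ℝ => Real.exp (-l * t)) (Ioi 0) := by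
    have := exp_neg_integrableOn_Ioi (0:ℝ) hl0
    refine this.congr_fun (fun t _ => by ring_nf) measurableSet_Ioi
  -- FTC on [0, T]
  have key : ∀ T : ℝ, 0 < T →
      (∫ t in (0:ℝ)..T, Df t * Real.exp (-l * t))
        - l * ∫ t in (0:ℝ)..T, g t * Real.exp (-l * t)
      = g T * Real.exp (-l * T) := by
    intro T hT
    have hderiv : ∀ x ∈ Ioo (0:ℝ) T,
        HasDerivAt (fun t => g t * Real.exp (-l * t))
          (Df x * Real.exp (-l * x) - l * (g x * Real.exp (-l * x))) x := by
      intro x hx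
      have he : HasDerivAt (fun t : ℝ => Real.exp (-l * t)) (Real.exp (-l * x) * (-l)) x := by
        have h1 : HasDerivAt (fun t : ℝ => -l * t) (-l) x := by
          simpa using (hasDerivAt_id x).const_mul (-l)
        exact h1.exp
      have : HasDerivAt (fun t => g t * Real.exp (-l * t))
          (Df x * Real.exp (-l * x) + g x * (Real.exp (-l * x) * (-l))) x := (hgD x hx.1).mul he
      convert this using 1
      ring
    have hcontT : ContinuousOn (fun t => g t * Real.exp (-l * t)) (Icc 0 T) := by
      exact (hgcont.mono (Icc_subset_Ici_self)).mul (Continuous.continuousOn (by fun_prop))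
    have hint1 : IntervalIntegrable (fun t => Df t * Real.exp (-l * t)) volume 0 T := by
      rw [intervalIntegrable_iff_integrableOn_Ioc_of_le hT.le]
      exact intDf.mono_set Ioc_subset_Ioi_self
    have hint2 : IntervalIntegrable (fun t => l * (g t * Real.exp (-l * t))) volume 0 T := by
      apply ContinuousOn.intervalIntegrable
      rw [uIcc_of_le hT.le]
      exact hcontT.const_smul l
    have hint : IntervalIntegrable
        (fun t => Df t * Real.exp (-l * t) - l * (g t * Real.exp (-l * t))) volume 0 T :=
      hint1.sub hint2
    have hftc := intervalIntegral.integral_eq_sub_of_hasDeriv_right_of_le hT.le hcontT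
      (fun x hx => (hderiv x hx).hasDerivWithinAt) hint
    rw [intervalIntegral.integral_sub hint1 hint2, intervalIntegral.integral_const_mul] at hftc
    rw [hftc, hg0]
    simp
  -- limits as T → ∞
  have tendsto1 : Tendsto (fun T => ∫ t in (0:ℝ)..T, Df t * Real.exp (-l * t)) atTop
      (nhds (laplace Df l)) :=
    intervalIntegral_tendsto_integral_Ioi 0 intDf tendsto_id
  have tendsto2 : Tendsto (fun T => ∫ t in (0:ℝ)..T, g t * Real.exp (-l * t)) atTop
      (nhds (laplace g l)) :=
    intervalIntegral_tendsto_integral_Ioi 0 intg tendsto_id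
  have tendsto3 : Tendsto (fun T => (∫ t in (0:ℝ)..T, Df t * Real.exp (-l * t))
      - l * ∫ t in (0:ℝ)..T, g t * Real.exp (-l * t)) atTop
      (nhds (laplace Df l - l * laplace g l)) :=
    tendsto1.sub (tendsto2.const_mul l)
  have tendsto4 : Tendsto (fun T => g T * Real.exp (-l * T)) atTop (nhds 0) := by
    have hb : Tendsto (fun T : ℝ => C * Real.exp ((cp + 1 - l) * T)) atTop (nhds 0) := by
      have h1 : Tendsto (fun T : ℝ => (cp + 1 - l) * T) atTop atBot :=
        Tendsto.const_mul_atTop_of_neg (by linarith) tendsto_id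
      have h2 := Real.tendsto_exp_atBot.comp h1
      have := h2.const_mul C
      simpa using this
    refine squeeze_zero_norm' ?_ hb
    filter_upwards [eventually_ge_atTop (0:ℝ)] with T hT
    calc ‖g T * Real.exp (-l * T)‖ = |g T| * Real.exp (-l * T) := by
          rw [norm_mul, Real.norm_eq_abs, Real.norm_eq_abs, abs_of_pos (Real.exp_pos _)]
      _ ≤ (C * Real.exp ((cp + 1) * T)) * Real.exp (-l * T) :=
          mul_le_mul_of_nonneg_right (hgbd' T hT) (Real.exp_pos _).le
      _ = C * Real.exp ((cp + 1 - l) * T) := by rw [mul_assoc, ← Real.exp_add]; ring_nf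
  have heq : laplace Df l - l * laplace g l = 0 := by
    have h5 : Tendsto (fun T => g T * Real.exp (-l * T)) atTop
        (nhds (laplace Df l - l * laplace g l)) := by
      refine tendsto3.congr' ?_
      filter_upwards [eventually_gt_atTop (0:ℝ)] with T hT
      exact key T hT
    exact (tendsto_nhds_unique h5 tendsto4)
  have hDfg : laplace Df l = l * laplace g l := by linarith
  -- Fubini step
  have hgF : laplace g l = (1/l) ^ ((1:ℝ)-β) * (laplace F l - F 0 * (1/l)) := by
    set μ := volume.restrict (Ioi (0:ℝ)) with hμ
    set K : ℝ × ℝ → ℝ := fun p =>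
      if p.2 < p.1 then (p.1 - p.2) ^ (-β) * (F p.2 - F 0) * Real.exp (-l * p.1) else 0 with hK
    have hKm : Measurable K := by
      refine Measurable.ite (measurableSet_lt measurable_snd measurable_fst) ?_ measurable_const
      fun_prop
    have hprod : AEStronglyMeasurable K (μ.prod μ) := hKm.aestronglyMeasurable
    have hind : ∀ t : ℝ, (fun s => K (t, s)) =
        (Iio t).indicator (fun s => (t - s) ^ (-β) * (F s - F 0) * Real.exp (-l * t)) := by
      intro t; funext s
      by_cases h : s < t
      · simp [hK, h, Set.indicator_of_mem (mem_Iio.2 h)]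
      · simp [hK, h, Set.indicator_of_notMem (fun hs => h (mem_Iio.1 hs))]
    have hIt : ∀ t : ℝ, 0 < t → I t = ∫ s in Ioo (0:ℝ) t, (t - s) ^ (-β) * (F s - F 0) := by
      intro t ht
      simp only [hIdef]
      rw [intervalIntegral.integral_of_le ht.le, integral_Ioc_eq_integral_Ioo]
    have hinner1 : ∀ t ∈ Ioi (0:ℝ), ∫ s, K (t, s) ∂μ = I t * Real.exp (-l * t) := by
      intro t ht
      rw [hind t, hμ, setIntegral_indicator measurableSet_Iio, Ioi_inter_Iio,
        integral_mul_const, hIt t ht]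
    have hinner_int : ∀ t : ℝ, Integrable (fun s => K (t, s)) μ := by
      intro t
      rw [hind t, hμ, integrable_indicator_iff measurableSet_Iio]
      have : IntegrableOn (fun s => (t - s) ^ (-β) * (F s - F 0) * Real.exp (-l * t))
          (Ioo 0 t) volume := (hker t).mul_const _
      rw [IntegrableOn, Measure.restrict_restrict measurableSet_Iio, inter_comm, Ioi_inter_Iio]
      exact this
    have hnorm_eq : ∀ t ∈ Ioi (0:ℝ), ∫ s, ‖K (t, s)‖ ∂μ
        = (∫ s in Ioo (0:ℝ) t, |(t - s) ^ (-β) * (F s - F 0)|) * Real.exp (-l * t) := by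
      intro t ht
      have h0 : (fun s => ‖K (t, s)‖) = (Iio t).indicator
          (fun s => |(t - s) ^ (-β) * (F s - F 0)| * Real.exp (-l * t)) := by
        funext s
        by_cases h : s < t
        · simp only [hK, if_pos h, Set.indicator_of_mem (mem_Iio.2 h), Real.norm_eq_abs,
            abs_mul, abs_of_pos (Real.exp_pos (-l * t))]
        · simp [hK, h, Set.indicator_of_notMem (fun hs => h (mem_Iio.1 hs))]
      rw [h0, hμ, setIntegral_indicator measurableSet_Iio, Ioi_inter_Iio, integral_mul_const]
    have hinner_norm : ∀ t ∈ Ioi (0:ℝ), ‖∫ s, ‖K (t, s)‖ ∂μ‖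
        ≤ (2 * M / (1 - β)) * Real.exp ((cp + 1 - l) * t) := by
      intro t ht
      rw [hnorm_eq t ht]
      have h2 : (0:ℝ) ≤ ∫ s in Ioo (0:ℝ) t, |(t - s) ^ (-β) * (F s - F 0)| :=
        integral_nonneg fun s => abs_nonneg _
      rw [Real.norm_eq_abs, abs_of_nonneg (mul_nonneg h2 (Real.exp_pos _).le)]
      have h3 : t ^ ((1:ℝ) - β) ≤ Real.exp t := hrpow_exp t (le_of_lt ht)
      calc (∫ s in Ioo (0:ℝ) t, |(t - s) ^ (-β) * (F s - F 0)|) * Real.exp (-l * t)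
          ≤ (2 * M * Real.exp (cp * t) * (t ^ ((1:ℝ) - β) / (1 - β))) * Real.exp (-l * t) :=
            mul_le_mul_of_nonneg_right (habs_bd t ht) (Real.exp_pos _).le
        _ = 2 * M / (1 - β) * (Real.exp (cp * t) * t ^ ((1:ℝ) - β) * Real.exp (-l * t)) := by
            ring
        _ ≤ 2 * M / (1 - β) * (Real.exp (cp * t) * Real.exp t * Real.exp (-l * t)) := by
            gcongr
        _ = 2 * M / (1 - β) * Real.exp ((cp + 1 - l) * t) := by
            rw [← Real.exp_add, ← Real.exp_add]
            ring_nf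
    have hKint : Integrable K (μ.prod μ) := by
      refine (integrable_prod_iff hprod).2 ⟨Filter.Eventually.of_forall hinner_int, ?_⟩
      have hmeas : AEStronglyMeasurable (fun t => ∫ s, ‖K (t, s)‖ ∂μ) μ :=
        hprod.norm.integral_prod_right'
      have hdom : Integrable (fun t : ℝ => (2 * M / (1 - β)) * Real.exp (-(l - (cp + 1)) * t)) μ :=
        (exp_neg_integrableOn_Ioi 0 (by linarith)).const_mul _
      refine hdom.mono' hmeas ?_
      rw [hμ, ae_restrict_iff' measurableSet_Ioi]
      filter_upwards with t ht
      calc ‖∫ s, ‖K (t, s)‖ ∂μ‖ ≤ (2 * M / (1 - β)) * Real.exp ((cp + 1 - l) * t) :=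
            hinner_norm t ht
        _ = (2 * M / (1 - β)) * Real.exp (-(l - (cp + 1)) * t) := by ring_nf
    have hswap := integral_integral_swap (f := fun t s => K (t, s)) (μ := μ) (ν := μ) hKint
    have hL : ∫ t, (∫ s, K (t, s) ∂μ) ∂μ = Real.Gamma (1 - β) * laplace g l := by
      have h1 : ∫ t, (∫ s, K (t, s) ∂μ) ∂μ = ∫ t in Ioi (0:ℝ), I t * Real.exp (-l * t) := by
        rw [hμ]
        exact setIntegral_congr_fun measurableSet_Ioi hinner1
      rw [h1]
      unfold laplace
      have h2 : ∀ t : ℝ, g t * Real.exp (-l * t)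
          = (1 / Real.Gamma (1 - β)) * (I t * Real.exp (-l * t)) := fun t => by
        rw [hgI]; ring
      simp_rw [h2]
      rw [MeasureTheory.integral_const_mul]
      field_simp
    have hinner2 : ∀ s ∈ Ioi (0:ℝ), ∫ t, K (t, s) ∂μ
        = ((F s - F 0) * Real.exp (-l * s)) * ((1/l) ^ ((1:ℝ)-β) * Real.Gamma (1 - β)) := by
      intro s hs
      have hind2 : (fun t => K (t, s)) = (Ioi s).indicator
          (fun t => (t - s) ^ (-β) * (F s - F 0) * Real.exp (-l * t)) := by
        funext t
        by_cases h : s < t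
        · simp [hK, h, Set.indicator_of_mem (mem_Ioi.2 h)]
        · simp [hK, h, Set.indicator_of_notMem (fun ht => h (mem_Ioi.1 ht))]
      rw [hind2, hμ, setIntegral_indicator measurableSet_Ioi, Ioi_inter_Ioi,
        max_eq_right (le_of_lt hs)]
      have h4 : ∫ t in Ioi s, (t - s) ^ (-β) * (F s - F 0) * Real.exp (-l * t)
          = ∫ u in Ioi (0:ℝ), u ^ (-β) * (F s - F 0) * Real.exp (-l * (u + s)) := by
        rw [← aux_shift (fun u => u ^ (-β) * (F s - F 0) * Real.exp (-l * (u + s))) s]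
        refine setIntegral_congr_fun measurableSet_Ioi fun t ht => ?_
        simp only [sub_add_cancel]
      rw [h4]
      have h5 : ∀ u : ℝ, u ^ (-β) * (F s - F 0) * Real.exp (-l * (u + s))
          = ((F s - F 0) * Real.exp (-l * s)) * (u ^ (-β) * Real.exp (-l * u)) := by
        intro u
        rw [show -l * (u + s) = -l * u + -l * s by ring, Real.exp_add]
        ring
      simp_rw [h5]
      rw [MeasureTheory.integral_const_mul, aux_gamma hβ1 hl0]
    have hexp_int : ∫ s in Ioi (0:ℝ), Real.exp (-l * s) = 1 / l := by
      have h := aux_gamma (β := 0) (by norm_num) hl0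
      simpa using h
    have hR : ∫ s, (∫ t, K (t, s) ∂μ) ∂μ
        = (laplace F l - F 0 * (1/l)) * ((1/l) ^ ((1:ℝ)-β) * Real.Gamma (1 - β)) := by
      have h6 : ∫ s, (∫ t, K (t, s) ∂μ) ∂μ
          = ∫ s in Ioi (0:ℝ), ((F s - F 0) * Real.exp (-l * s))
              * ((1/l) ^ ((1:ℝ)-β) * Real.Gamma (1 - β)) := by
        rw [hμ]
        exact setIntegral_congr_fun measurableSet_Ioi hinner2
      rw [h6, integral_mul_const]
      congr 1
      have h7 : ∀ s : ℝ, (F s - F 0) * Real.exp (-l * s)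
          = F s * Real.exp (-l * s) - F 0 * Real.exp (-l * s) := fun s => by ring
      simp_rw [h7]
      rw [integral_sub intF (intone.const_mul (F 0)), MeasureTheory.integral_const_mul,
        hexp_int]
      unfold laplace
      rfl
    have hfinal : Real.Gamma (1 - β) * laplace g l
        = (laplace F l - F 0 * (1/l)) * ((1/l) ^ ((1:ℝ)-β) * Real.Gamma (1 - β)) := by
      rw [← hL, ← hR]
      exact hswap
    have hΓne : Real.Gamma (1 - β) ≠ 0 := ne_of_gt hΓpos
    apply mul_left_cancel₀ hΓne
    rw [hfinal]
    ring
  -- final algebra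
  have hlapF : laplace f l = laplace F l := by
    unfold laplace
    refine setIntegral_congr_fun measurableSet_Ioi fun t ht => ?_
    rw [hFeq t (le_of_lt ht)]
  have hpow : (1/l : ℝ) ^ ((1:ℝ)-β) = l ^ (β - 1) := by
    rw [one_div, Real.inv_rpow hl0.le, ← Real.rpow_neg hl0.le, neg_sub]
  have e1 : l ^ β = l * l ^ (β - 1) := by
    have := Real.rpow_add hl0 1 (β - 1)
    rw [show (1:ℝ) + (β - 1) = β by ring, Real.rpow_one] at this
    exact this
  rw [hDfg, hgF, hpow, ← hlapF, ← hF0, e1]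
  field_simp
end

section
/- (Fractional Gronwall–Bellman inequality.) Let β > 0, B > 0, let y be a nonnegative continuous function on [0, T], and let A be a nonnegative nondecreasing function on [0, T]. If y(t) ≤ A(t) + B ∫₀ᵗ (t−s)^{β−1} y(s) ds for all t ∈ [0, T], then y(t) ≤ A(t) · E_β(B Γ(β) t^β) for all t ∈ [0, T]. -/
open MeasureTheory intervalIntegral Set Filter Topology

/-- The two-parameter Mittag-Leffler function
`E_{β,ρ}(z) = ∑_{k=0}^∞ z^k / Γ(βk + ρ)`. The one-parameter Mittag-Leffler
function is `E_β = E_{β,1}`. -/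
noncomputable def mittagLeffler (β ρ z : ℝ) : ℝ :=
  ∑' k : ℕ, z ^ k / Real.Gamma (β * k + ρ)


lemma betaReal {a b t : ℝ} (ha : 0 < a) (hb : 0 < b) (ht : 0 < t) :
    ∫ s in (0:ℝ)..t, s ^ (b - 1) * (t - s) ^ (a - 1) =
      Real.Gamma a * Real.Gamma b / Real.Gamma (a + b) * t ^ (a + b - 1) := by
  have hab : (0:ℝ) < a + b := by linarith
  have h1 : ((∫ s in (0:ℝ)..t, s ^ (b - 1) * (t - s) ^ (a - 1) : ℝ) : ℂ)
      = ∫ s in (0:ℝ)..t, (s : ℂ) ^ ((b : ℂ) - 1) * ((t : ℂ) - s) ^ ((a : ℂ) - 1) := by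
    rw [← intervalIntegral.integral_ofReal]
    refine intervalIntegral.integral_congr fun s hs => ?_
    rw [uIcc_of_le ht.le] at hs
    rw [Complex.ofReal_mul, Complex.ofReal_cpow hs.1, Complex.ofReal_cpow (by linarith [hs.2])]
    push_cast
    ring
  have h2 := Complex.betaIntegral_scaled (b : ℂ) (a : ℂ) ht
  have h3 := Complex.Gamma_mul_Gamma_eq_betaIntegral
    (s := (b:ℂ)) (t := (a:ℂ)) (by simpa using hb) (by simpa using ha)
  have hΓ : Complex.Gamma ((b:ℂ) + a) ≠ 0 := by
    apply Complex.Gamma_ne_zero_of_re_pos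
    simp only [Complex.add_re, Complex.ofReal_re]
    linarith
  have h4 : Complex.betaIntegral (b:ℂ) (a:ℂ)
      = Complex.Gamma (b:ℂ) * Complex.Gamma (a:ℂ) / Complex.Gamma ((b:ℂ) + a) := by
    rw [eq_div_iff hΓ]
    linear_combination -h3
  apply Complex.ofReal_injective
  rw [h1, h2, h4]
  have e1 : ((b:ℂ) + a - 1) = ((a + b - 1 : ℝ) : ℂ) := by push_cast; ring
  rw [e1, ← Complex.ofReal_cpow ht.le]
  rw [Complex.Gamma_ofReal, Complex.Gamma_ofReal, (by push_cast; ring : ((b:ℂ) + a) = ((a + b : ℝ) : ℂ)), Complex.Gamma_ofReal]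
  push_cast
  ring

lemma gamma_ratio_lower {β : ℝ} (hβ0 : 0 < β) (hβ1 : β ≤ 1) {z : ℝ} (hz : 1 ≤ z) :
    Real.Gamma z * (z / (z + β) ^ (1 - β)) ≤ Real.Gamma (z + β) := by
  have hz0 : 0 < z := lt_of_lt_of_le one_pos hz
  have hzβ : 0 < z + β := by linarith
  have hzβ1 : 0 < z + β + 1 := by linarith
  have hG1 : 0 < Real.Gamma (z + β) := Real.Gamma_pos_of_pos hzβ
  have hG2 : 0 < Real.Gamma (z + β + 1) := Real.Gamma_pos_of_pos hzβ1
  have hGz : 0 < Real.Gamma z := Real.Gamma_pos_of_pos hz0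
  have hc := Real.convexOn_log_Gamma.2 (mem_Ioi.mpr hzβ) (mem_Ioi.mpr hzβ1)
    hβ0.le (by linarith : (0:ℝ) ≤ 1 - β) (by ring)
  simp only [smul_eq_mul, Function.comp_apply] at hc
  have harg : β * (z + β) + (1 - β) * (z + β + 1) = z + 1 := by ring
  rw [harg] at hc
  -- exponentiate
  have hexp : Real.Gamma (z + 1) ≤
      Real.Gamma (z + β) ^ β * Real.Gamma (z + β + 1) ^ (1 - β) := by
    have h1 : Real.Gamma (z + 1) = Real.exp (Real.log (Real.Gamma (z + 1))) :=
      (Real.exp_log (Real.Gamma_pos_of_pos (by linarith))).symm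
    rw [h1]
    calc Real.exp (Real.log (Real.Gamma (z + 1)))
        ≤ Real.exp (β * Real.log (Real.Gamma (z + β))
            + (1 - β) * Real.log (Real.Gamma (z + β + 1))) := Real.exp_le_exp.mpr hc
      _ = Real.Gamma (z + β) ^ β * Real.Gamma (z + β + 1) ^ (1 - β) := by
          rw [Real.exp_add, Real.rpow_def_of_pos hG1, Real.rpow_def_of_pos hG2,
            mul_comm β, mul_comm (1 - β)]
  rw [Real.Gamma_add_one hz0.ne'] at hexp
  rw [show z + β + 1 = (z + β) + 1 by ring, Real.Gamma_add_one hzβ.ne'] at hexp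
  have hsplit : ((z + β) * Real.Gamma (z + β)) ^ (1 - β)
      = (z + β) ^ (1 - β) * Real.Gamma (z + β) ^ (1 - β) :=
    Real.mul_rpow hzβ.le hG1.le
  rw [hsplit] at hexp
  have hcomb : Real.Gamma (z + β) ^ β * Real.Gamma (z + β) ^ (1 - β)
      = Real.Gamma (z + β) := by
    rw [← Real.rpow_add hG1]; norm_num
  have hexp2 : z * Real.Gamma z ≤ Real.Gamma (z + β) * (z + β) ^ (1 - β) := by
    calc z * Real.Gamma z ≤ Real.Gamma (z + β) ^ β
          * ((z + β) ^ (1 - β) * Real.Gamma (z + β) ^ (1 - β)) := hexp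
      _ = Real.Gamma (z + β) * (z + β) ^ (1 - β) := by
          rw [show Real.Gamma (z + β) ^ β * ((z + β) ^ (1 - β) * Real.Gamma (z + β) ^ (1 - β))
            = Real.Gamma (z + β) ^ β * Real.Gamma (z + β) ^ (1 - β) * (z + β) ^ (1 - β) by ring,
            hcomb]
  have hpow : 0 < (z + β) ^ (1 - β) := Real.rpow_pos_of_pos hzβ _
  calc Real.Gamma z * (z / (z + β) ^ (1 - β))
      = z * Real.Gamma z / (z + β) ^ (1 - β) := by ring
    _ ≤ Real.Gamma (z + β) := by rw [div_le_iff₀ hpow]; exact hexp2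

lemma summable_ml {β : ℝ} (hβ : 0 < β) {x : ℝ} (hx : 0 ≤ x) :
    Summable (fun k : ℕ => x ^ k / Real.Gamma (β * k + 1)) := by
  set β' := min β 1 with hβ'def
  have hβ'0 : 0 < β' := lt_min hβ one_pos
  have hβ'1 : β' ≤ 1 := min_le_right _ _
  have hβ'β : β' ≤ β := min_le_left _ _
  have hz : ∀ k : ℕ, (1:ℝ) ≤ β * k + 1 := fun k => le_add_of_nonneg_left (by positivity)
  -- the key tendsto
  have htend : Tendsto (fun k : ℕ => (β * k + 1) ^ β') atTop atTop := by
    apply (tendsto_rpow_atTop hβ'0).comp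
    apply tendsto_atTop_add_const_right
    exact (tendsto_natCast_atTop_atTop (R := ℝ)).const_mul_atTop hβ
  apply summable_of_ratio_norm_eventually_le (r := 1/2) (by norm_num)
  filter_upwards [htend.eventually_ge_atTop (4 * x),
      htend.eventually_ge_atTop (4 * (2 - β'))] with k hk4 hk2'
  set z : ℝ := β * k + 1 with hzdef
  have hz1 : (1:ℝ) ≤ z := hz k
  have hz0 : (0:ℝ) < z := by linarith
  have hG : 0 < Real.Gamma z := Real.Gamma_pos_of_pos hz0
  have hGβ : 0 < Real.Gamma (z + β) := Real.Gamma_pos_of_pos (by linarith)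
  -- z ^ β' is large
  have hzb' : (0:ℝ) < z ^ β' := Real.rpow_pos_of_pos hz0 _
  have hzb'_le : z ^ β' ≤ z := by
    calc z ^ β' ≤ z ^ (1:ℝ) := Real.rpow_le_rpow_of_exponent_le hz1 hβ'1
      _ = z := Real.rpow_one z
  have h2 : 2 ≤ z + β' := by
    have : 4 * (2 - β') ≤ z := le_trans hk2' hzb'_le
    nlinarith [hβ'0, hβ'1]
  -- key: z / (z+β')^(1-β') ≥ z^β' / 2 ≥ 2x
  have hden : (0:ℝ) < (z + β') ^ (1 - β') := Real.rpow_pos_of_pos (by linarith) _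
  have hstep1 : (z + β') ^ (1 - β') ≤ 2 * z ^ (1 - β') := by
    calc (z + β') ^ (1 - β') ≤ (2 * z) ^ (1 - β') := by
          apply Real.rpow_le_rpow (by linarith) (by linarith) (by linarith)
      _ = 2 ^ (1 - β') * z ^ (1 - β') := Real.mul_rpow (by norm_num) hz0.le
      _ ≤ 2 * z ^ (1 - β') := by
          have h21 : (2:ℝ) ^ (1 - β') ≤ 2 ^ (1:ℝ) :=
            Real.rpow_le_rpow_of_exponent_le one_le_two (by linarith)
          have : (0:ℝ) ≤ z ^ (1 - β') := (Real.rpow_pos_of_pos hz0 _).le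
          nlinarith [h21, Real.rpow_one (2:ℝ)]
  have hz_split : z = z ^ β' * z ^ (1 - β') := by
    rw [← Real.rpow_add hz0]; norm_num
  have hratio : z ^ β' / 2 ≤ z / (z + β') ^ (1 - β') := by
    rw [le_div_iff₀ hden]
    calc z ^ β' / 2 * (z + β') ^ (1 - β') ≤ z ^ β' / 2 * (2 * z ^ (1 - β')) := by
          apply mul_le_mul_of_nonneg_left hstep1 (by positivity)
      _ = z ^ β' * z ^ (1 - β') := by ring
      _ = z := hz_split.symm
  -- Γ(z + β) ≥ Γ(z + β')
  have hmono : Real.Gamma (z + β') ≤ Real.Gamma (z + β) :=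
    Real.Gamma_strictMonoOn_Ici.monotoneOn (by simpa using h2) (by simp; nlinarith) (by linarith)
  have hlow := gamma_ratio_lower hβ'0 hβ'1 hz1
  -- combine: 2 x Γ(z) ≤ Γ(z+β)
  have hxle : 2 * x ≤ z ^ β' / 2 := by linarith
  have hkey : 2 * x * Real.Gamma z ≤ Real.Gamma (z + β) := by
    calc 2 * x * Real.Gamma z ≤ z ^ β' / 2 * Real.Gamma z :=
          mul_le_mul_of_nonneg_right hxle hG.le
      _ ≤ z / (z + β') ^ (1 - β') * Real.Gamma z :=
          mul_le_mul_of_nonneg_right hratio hG.le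
      _ = Real.Gamma z * (z / (z + β') ^ (1 - β')) := by ring
      _ ≤ Real.Gamma (z + β') := hlow
      _ ≤ Real.Gamma (z + β) := hmono
  -- finish
  have hnext : β * (k + 1 : ℕ) + 1 = z + β := by push_cast; ring
  rw [Real.norm_eq_abs, Real.norm_eq_abs, hnext,
    abs_of_nonneg (by positivity), abs_of_nonneg (by positivity)]
  rw [show (1:ℝ)/2 * (x ^ k / Real.Gamma z) = (1/2 * x ^ k) / Real.Gamma z by ring,
    div_le_div_iff₀ hGβ hG]
  calc x ^ (k+1) * Real.Gamma z = x * Real.Gamma z * x ^ k := by ring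
    _ ≤ 1/2 * Real.Gamma (z + β) * x ^ k := by
        apply mul_le_mul_of_nonneg_right _ (by positivity)
        nlinarith
    _ = 1/2 * x ^ k * Real.Gamma (z + β) := by ring


/-- The fractional Gronwall–Bellman inequality: if `y ≥ 0` is continuous on
`[0,T]`, `A ≥ 0` is nondecreasing on `[0,T]`, `B > 0`, `β > 0`, and
`y(t) ≤ A(t) + B ∫₀ᵗ (t−s)^{β−1} y(s) ds` on `[0,T]`, then
`y(t) ≤ A(t) E_β(B Γ(β) t^β)` on `[0,T]`. -/
theorem fractional_gronwall (β B T : ℝ) (hβ : 0 < β) (hB : 0 < B)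
    (y A : ℝ → ℝ)
    (hy_cont : ContinuousOn y (Set.Icc 0 T))
    (hy_nonneg : ∀ t ∈ Set.Icc (0:ℝ) T, 0 ≤ y t)
    (hA_nonneg : ∀ t ∈ Set.Icc (0:ℝ) T, 0 ≤ A t)
    (hA_mono : MonotoneOn A (Set.Icc 0 T))
    (h : ∀ t ∈ Set.Icc (0:ℝ) T,
      y t ≤ A t + B * ∫ s in (0:ℝ)..t, (t - s) ^ (β - 1) * y s) :
    ∀ t ∈ Set.Icc (0:ℝ) T,
      y t ≤ A t * mittagLeffler β 1 (B * Real.Gamma β * t ^ β) := by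
  intro t ht
  obtain ⟨ht0, htT⟩ := ht
  have hTnn : (0:ℝ) ≤ T := ht0.trans htT
  have hΓβ : 0 < Real.Gamma β := Real.Gamma_pos_of_pos hβ
  set C := B * Real.Gamma β with hC
  have hC0 : 0 < C := mul_pos hB hΓβ
  obtain ⟨M, hM⟩ := isCompact_Icc.exists_bound_of_continuousOn hy_cont
  have hMy : ∀ s ∈ Icc (0:ℝ) T, y s ≤ M := fun s hs =>
    (le_abs_self _).trans (by simpa [Real.norm_eq_abs] using hM s hs)
  have hM0 : 0 ≤ M := le_trans (hy_nonneg 0 ⟨le_refl 0, hTnn⟩) (hMy 0 ⟨le_refl 0, hTnn⟩)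
  set a : ℕ → ℝ → ℝ := fun k u => C ^ k * u ^ (β * k) / Real.Gamma (β * k + 1) with ha
  have hΓpos : ∀ k : ℕ, 0 < Real.Gamma (β * k + 1) := fun k =>
    Real.Gamma_pos_of_pos (by positivity)
  have ha_nn : ∀ (k : ℕ) (u : ℝ), 0 ≤ u → 0 ≤ a k u := by
    intro k u hu
    have h1 := (hΓpos k).le
    have h2 : (0:ℝ) ≤ u ^ (β * k) := Real.rpow_nonneg hu _
    have h3 : (0:ℝ) ≤ C ^ k := (pow_pos hC0 k).le
    rw [ha]
    positivity
  have ha0 : ∀ u : ℝ, a 0 u = 1 := by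
    intro u
    simp [ha, Real.Gamma_one]
  have ha_zero : ∀ k : ℕ, k ≠ 0 → a k 0 = 0 := by
    intro k hk
    have : β * k ≠ 0 := by
      have : (0:ℝ) < k := by exact_mod_cast Nat.pos_of_ne_zero hk
      positivity
    rw [ha]
    simp [Real.zero_rpow this]
  have hkern_int : ∀ u : ℝ, 0 ≤ u →
      IntervalIntegrable (fun s => (u - s) ^ (β - 1)) volume 0 u := by
    intro u hu
    have h1 := (intervalIntegral.intervalIntegrable_rpow' (a := 0) (b := u)
      (by linarith : (-1:ℝ) < β - 1)).comp_sub_left u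
    simpa using h1.symm
  have hint : ∀ (u : ℝ), 0 ≤ u → ∀ (g : ℝ → ℝ), ContinuousOn g (Icc 0 u) →
      IntervalIntegrable (fun s => (u - s) ^ (β - 1) * g s) volume 0 u := by
    intro u hu g hg
    exact (hkern_int u hu).mul_continuousOn (by rwa [uIcc_of_le hu])
  have hcont_a : ∀ (k : ℕ) (s : Set ℝ), ContinuousOn (a k) s := by
    intro k s
    intro x _
    apply ContinuousWithinAt.div_const
    apply ContinuousWithinAt.mul continuousWithinAt_const
    exact (Real.continuousAt_rpow_const x _ (Or.inr (by positivity))).continuousWithinAt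
  -- the key integral computation
  have hstep : ∀ (u : ℝ), 0 < u → ∀ k : ℕ,
      B * ∫ s in (0:ℝ)..u, (u - s) ^ (β - 1) * a k s = a (k + 1) u := by
    intro u hu k
    have hbr := betaReal (a := β) (b := β * k + 1) hβ (by positivity) hu
    rw [show β * (k:ℝ) + 1 - 1 = β * k by ring] at hbr
    have heq : (fun s : ℝ => (u - s) ^ (β - 1) * a k s)
        = fun s : ℝ => (C ^ k / Real.Gamma (β * k + 1)) * (s ^ (β * k) * (u - s) ^ (β - 1)) := by
      funext s; rw [ha]; ring
    rw [heq, intervalIntegral.integral_const_mul, hbr]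
    rw [show β + (β * (k:ℝ) + 1) - 1 = β * ((k:ℕ) + 1 : ℕ) by push_cast; ring,
      show β + (β * (k:ℝ) + 1) = β * ((k:ℕ) + 1 : ℕ) + 1 by push_cast; ring]
    rw [ha]
    have h1 := (hΓpos k).ne'
    have h2 := (hΓpos (k + 1)).ne'
    field_simp [hC]
    ring
  -- the main induction
  have main : ∀ n : ℕ, ∀ u ∈ Icc (0:ℝ) T,
      y u ≤ A u * (∑ k ∈ Finset.range n, a k u) + M * a n u := by
    intro n
    induction n with
    | zero =>
      intro u hu
      simpa [ha0] using hMy u hu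
    | succ n ihn =>
      intro u hu
      obtain ⟨hu0, huT⟩ := hu
      rcases hu0.lt_or_eq with hupos | hu0'
      · -- 0 < u
        have hIccsub : Icc (0:ℝ) u ⊆ Icc 0 T := Icc_subset_Icc le_rfl huT
        set P : ℝ → ℝ := fun s => A u * (∑ k ∈ Finset.range n, a k s) + M * a n s with hP
        have hPcont : ContinuousOn P (Icc 0 u) := by
          apply ContinuousOn.add
          · exact continuousOn_const.mul
              (continuousOn_finset_sum _ fun k _ => hcont_a k _)
          · exact continuousOn_const.mul (hcont_a n _)
        have hintf : IntervalIntegrable (fun s => (u - s) ^ (β - 1) * y s) volume 0 u :=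
          hint u hu0 y (hy_cont.mono hIccsub)
        have hintg : IntervalIntegrable (fun s => (u - s) ^ (β - 1) * P s) volume 0 u :=
          hint u hu0 P hPcont
        have hbound : ∀ s ∈ Icc (0:ℝ) u,
            (u - s) ^ (β - 1) * y s ≤ (u - s) ^ (β - 1) * P s := by
          intro s hs
          have hsT : s ∈ Icc (0:ℝ) T := hIccsub hs
          have hker : 0 ≤ (u - s) ^ (β - 1) := Real.rpow_nonneg (by linarith [hs.2]) _
          apply mul_le_mul_of_nonneg_left _ hker
          calc y s ≤ A s * (∑ k ∈ Finset.range n, a k s) + M * a n s := ihn s hsT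
            _ ≤ P s := by
                refine add_le_add ?_ le_rfl
                apply mul_le_mul_of_nonneg_right (hA_mono hsT ⟨hu0, huT⟩ hs.2)
                exact Finset.sum_nonneg fun k _ => ha_nn k s hs.1
        have hmono_int := intervalIntegral.integral_mono_on hu0 hintf hintg hbound
        -- split the integral of the RHS
        have hterm_int : ∀ k : ℕ,
            IntervalIntegrable (fun s => (u - s) ^ (β - 1) * a k s) volume 0 u :=
          fun k => hint u hu0 (a k) (hcont_a k _)
        have hgsplit : (fun s => (u - s) ^ (β - 1) * P s)
            = fun s => (∑ k ∈ Finset.range n, A u * ((u - s) ^ (β - 1) * a k s))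
              + M * ((u - s) ^ (β - 1) * a n s) := by
          funext s
          rw [hP]
          simp only []
          rw [mul_add]
          congr 1
          · rw [← Finset.mul_sum, ← Finset.mul_sum]
            ring
          · ring
        have hI : (∫ s in (0:ℝ)..u, (u - s) ^ (β - 1) * P s)
            = (∑ k ∈ Finset.range n, A u * ∫ s in (0:ℝ)..u, (u - s) ^ (β - 1) * a k s)
              + M * ∫ s in (0:ℝ)..u, (u - s) ^ (β - 1) * a n s := by
          rw [hgsplit]
          have hsum_int : IntervalIntegrable
              (fun s => ∑ k ∈ Finset.range n, A u * ((u - s) ^ (β - 1) * a k s)) volume 0 u := by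
            have h2 := IntervalIntegrable.sum (μ := volume) (a := (0:ℝ)) (b := u)
              (f := fun (k : ℕ) (s : ℝ) => A u * ((u - s) ^ (β - 1) * a k s))
              (Finset.range n) (fun k _ => (hterm_int k).const_mul (A u))
            rw [Finset.sum_fn] at h2
            exact h2
          rw [intervalIntegral.integral_add hsum_int ((hterm_int n).const_mul M)]
          rw [intervalIntegral.integral_finset_sum (f := fun (k : ℕ) (s : ℝ) => A u * ((u - s) ^ (β - 1) * a k s))
              (fun k _ => (hterm_int k).const_mul (A u)),
            intervalIntegral.integral_const_mul]
          congr 1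
          exact Finset.sum_congr rfl fun k _ => intervalIntegral.integral_const_mul _ _
        -- compute B * RHS
        have hBI : B * ∫ s in (0:ℝ)..u, (u - s) ^ (β - 1) * P s
            = (∑ k ∈ Finset.range n, A u * a (k + 1) u) + M * a (n + 1) u := by
          rw [hI, mul_add, Finset.mul_sum]
          congr 1
          · refine Finset.sum_congr rfl fun k _ => ?_
            rw [← hstep u hupos k]; ring
          · rw [← hstep u hupos n]; ring
        have hsum_shift : A u * (∑ k ∈ Finset.range (n + 1), a k u)
            = A u + ∑ k ∈ Finset.range n, A u * a (k + 1) u := by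
          rw [Finset.sum_range_succ', ha0, mul_add, mul_one, Finset.mul_sum, add_comm]
        calc y u ≤ A u + B * ∫ s in (0:ℝ)..u, (u - s) ^ (β - 1) * y s := h u ⟨hu0, huT⟩
          _ ≤ A u + B * ∫ s in (0:ℝ)..u, (u - s) ^ (β - 1) * P s := by
              have := mul_le_mul_of_nonneg_left hmono_int hB.le
              linarith
          _ = A u * (∑ k ∈ Finset.range (n + 1), a k u) + M * a (n + 1) u := by
              rw [hBI, hsum_shift]; ring
      · -- u = 0
        subst hu0'
        have hsum0 : ∑ k ∈ Finset.range (n + 1), a k 0 = 1 := by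
          rw [Finset.sum_eq_single 0]
          · exact ha0 0
          · intro k _ hk0; exact ha_zero k hk0
          · intro hcon; simp at hcon
        rw [hsum0, ha_zero (n + 1) (Nat.succ_ne_zero n)]
        have h0 := h 0 ⟨le_refl 0, hTnn⟩
        simpa using h0
  -- pass to the limit
  have hterm : ∀ k : ℕ, (C * t ^ β) ^ k / Real.Gamma (β * k + 1) = a k t := by
    intro k
    rw [ha, mul_pow, ← Real.rpow_natCast (t ^ β) k, ← Real.rpow_mul ht0]
  have hsumma : Summable (fun k => a k t) :=
    (summable_ml hβ (by positivity : (0:ℝ) ≤ C * t ^ β)).congr hterm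
  have hE : mittagLeffler β 1 (C * t ^ β) = ∑' k, a k t := tsum_congr hterm
  have hpartial : ∀ n, ∑ k ∈ Finset.range n, a k t ≤ ∑' k, a k t := fun n =>
    Summable.sum_le_tsum _ (fun k _ => ha_nn k t ht0) hsumma
  have htend0 : Tendsto (fun n => M * a n t) atTop (𝓝 0) := by
    simpa using hsumma.tendsto_atTop_zero.const_mul M
  have hfin : ∀ n, y t ≤ A t * (∑' k, a k t) + M * a n t := by
    intro n
    calc y t ≤ A t * (∑ k ∈ Finset.range n, a k t) + M * a n t := main n t ⟨ht0, htT⟩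
      _ ≤ A t * (∑' k, a k t) + M * a n t := by
          have := mul_le_mul_of_nonneg_left (hpartial n) (hA_nonneg t ⟨ht0, htT⟩)
          linarith
  have hlim : Tendsto (fun n => A t * (∑' k, a k t) + M * a n t) atTop
      (𝓝 (A t * (∑' k, a k t))) := by
    simpa using tendsto_const_nhds.add htend0
  rw [hE]
  exact ge_of_tendsto' hlim hfin
end

section
/- Let β ∈ (0,1) and ρ > 0. There exist constants C₁, C₂ > 0 such that for all t > 0, |E_{β,ρ}(t)| ≤ C₁ (1 + t)^{(1−ρ)/β} e^{t^{1/β}} + C₂/(1 + t). -/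
open Finset Real Nat

/-- Chord lower bound for Gamma from log-convexity:
for `y ∈ [n+1, n+2]`, `Γ(y) ≥ (n+1)! * (n+2)^(y-(n+2))`. -/
lemma gamma_chord_lb (n : ℕ) {y : ℝ} (h1 : (n:ℝ)+1 ≤ y) (h2 : y ≤ (n:ℝ)+2) :
    ((n+1)! : ℝ) * ((n:ℝ)+2) ^ (y - ((n:ℝ)+2)) ≤ Real.Gamma y := by
  have hn0 : (0:ℝ) ≤ (n:ℝ) := Nat.cast_nonneg n
  have hy0 : 0 < y := by linarith
  set d : ℝ := (n:ℝ)+3 - y with hd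
  have hd1 : 1 ≤ d := by simp [hd]; linarith
  have hd2 : d ≤ 2 := by simp [hd]; linarith
  have hdpos : 0 < d := by linarith
  have hmem1 : y ∈ Set.Ioi (0:ℝ) := hy0
  have hmem2 : ((n:ℝ)+3) ∈ Set.Ioi (0:ℝ) := by simp; linarith
  have ha : (0:ℝ) ≤ 1/d := by positivity
  have hb : (0:ℝ) ≤ 1 - 1/d := by
    have : 1/d ≤ 1 := by rw [div_le_one hdpos]; exact hd1
    linarith
  have hab : 1/d + (1 - 1/d) = 1 := by ring
  have hc := Real.convexOn_log_Gamma.2 hmem1 hmem2 ha hb hab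
  have hcomb : (1/d) • y + (1 - 1/d) • ((n:ℝ)+3) = (n:ℝ)+2 := by
    have hd' : d ≠ 0 := ne_of_gt hdpos
    simp only [smul_eq_mul]
    calc (1/d) * y + (1 - 1/d) * ((n:ℝ)+3) = ((n:ℝ)+3) - (1/d) * d := by rw [hd]; ring
      _ = (n:ℝ)+2 := by rw [one_div, inv_mul_cancel₀ hd']; ring
  rw [hcomb] at hc
  simp only [smul_eq_mul, Function.comp_apply] at hc
  -- identify Gamma values at integers
  have hg1 : Real.Gamma ((n:ℝ)+2) = ((n+1)! : ℝ) := by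
    have := Real.Gamma_nat_eq_factorial (n+1)
    push_cast at this ⊢
    convert this using 2 <;> ring
  have hg2 : Real.Gamma ((n:ℝ)+3) = ((n+2)! : ℝ) := by
    have := Real.Gamma_nat_eq_factorial (n+2)
    push_cast at this ⊢
    convert this using 2 <;> ring
  rw [hg1, hg2] at hc
  have hfac : ((n+2)! : ℝ) = ((n:ℝ)+2) * ((n+1)! : ℝ) := by
    rw [Nat.factorial_succ]
    push_cast
    ring
  have hfacpos : (0:ℝ) < ((n+1)! : ℝ) := by positivity
  have hlog2 : Real.log ((n+2)! : ℝ) = Real.log ((n:ℝ)+2) + Real.log ((n+1)! : ℝ) := by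
    rw [hfac, Real.log_mul (by linarith) (ne_of_gt hfacpos)]
  -- from hc: log ((n+1)!) ≤ (1/d) * log Γ y + (1-1/d) * (log(n+2) + log((n+1)!))
  -- multiply by d:
  have hkey : Real.log ((n+1)! : ℝ) + (y - ((n:ℝ)+2)) * Real.log ((n:ℝ)+2)
      ≤ Real.log (Real.Gamma y) := by
    rw [hlog2] at hc
    have hd' : d ≠ 0 := ne_of_gt hdpos
    have := mul_le_mul_of_nonneg_left hc (le_of_lt hdpos)
    have hexp : d * (1/d * Real.log (Real.Gamma y)
        + (1 - 1/d) * (Real.log ((n:ℝ)+2) + Real.log ((n+1)! : ℝ)))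
        = Real.log (Real.Gamma y)
          + (d-1) * (Real.log ((n:ℝ)+2) + Real.log ((n+1)! : ℝ)) := by
      field_simp
    rw [hexp] at this
    have hd1' : d - 1 = ((n:ℝ)+2) - y := by rw [hd]; ring
    nlinarith [this]
  have hGpos : 0 < Real.Gamma y := Real.Gamma_pos_of_pos hy0
  calc ((n+1)! : ℝ) * ((n:ℝ)+2) ^ (y - ((n:ℝ)+2))
      = Real.exp (Real.log ((n+1)! : ℝ) + (y - ((n:ℝ)+2)) * Real.log ((n:ℝ)+2)) := by
        rw [Real.exp_add, Real.rpow_def_of_pos (by linarith), Real.exp_log hfacpos,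
          mul_comm (Real.log _)]
    _ ≤ Real.exp (Real.log (Real.Gamma y)) := Real.exp_le_exp.mpr hkey
    _ = Real.Gamma y := Real.exp_log hGpos

/-- `Γ(x) ≥ 1/2` for `0 < x ≤ 1`. -/
lemma gamma_ge_half {x : ℝ} (h0 : 0 < x) (h1 : x ≤ 1) : (1/2 : ℝ) ≤ Real.Gamma x := by
  have hrec : Real.Gamma (x+1) = x * Real.Gamma x := Real.Gamma_add_one (ne_of_gt h0)
  have hcb := gamma_chord_lb 0 (y := x+1) (by push_cast; linarith) (by push_cast; linarith)
  push_cast at hcb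
  have hexp : x + 1 - ((0:ℝ)+2) = x - 1 := by ring
  rw [hexp] at hcb
  norm_num at hcb
  have h3 : ((2:ℝ)) ^ (-1:ℝ) ≤ (2:ℝ) ^ (x-1) :=
    Real.rpow_le_rpow_of_exponent_le one_le_two (by linarith)
  rw [Real.rpow_neg_one] at h3
  have hGpos : 0 < Real.Gamma x := Real.Gamma_pos_of_pos h0
  have hx1 : (1/2:ℝ) ≤ Real.Gamma (x+1) := by
    have : (1/2:ℝ) = 2⁻¹ := by norm_num
    linarith [hcb, h3]
  nlinarith [mul_nonneg (sub_nonneg.mpr h1) hGpos.le]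

/-- Termwise bound: for `s ≥ 1` and `a ≥ 0`, with `n = ⌊a⌋₊`,
`s^a / Γ(a+1) ≤ s^(n+1)/(n+1)! + 2 s^n/n!`. -/
lemma term_bound {s a : ℝ} (hs : 1 ≤ s) (ha : 0 ≤ a) :
    s ^ a / Real.Gamma (a+1) ≤
      s ^ (⌊a⌋₊+1) / ((⌊a⌋₊+1)! : ℝ) + 2 * s ^ ⌊a⌋₊ / ((⌊a⌋₊)! : ℝ) := by
  have hs0 : (0:ℝ) < s := by linarith
  set n := ⌊a⌋₊ with hn
  have hn1 : (n:ℝ) ≤ a := Nat.floor_le ha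
  have hn2 : a < (n:ℝ)+1 := Nat.lt_floor_add_one a
  have hGlb : ((n+1)! : ℝ) * ((n:ℝ)+2) ^ (a+1 - ((n:ℝ)+2)) ≤ Real.Gamma (a+1) :=
    gamma_chord_lb n (by linarith) (by linarith)
  have hGpos : 0 < Real.Gamma (a+1) := Real.Gamma_pos_of_pos (by linarith)
  have hlbpos : 0 < ((n+1)! : ℝ) * ((n:ℝ)+2) ^ (a+1 - ((n:ℝ)+2)) := by positivity
  have step1 : s ^ a / Real.Gamma (a+1)
      ≤ s ^ a / (((n+1)! : ℝ) * ((n:ℝ)+2) ^ (a+1 - ((n:ℝ)+2))) := by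
    exact div_le_div_of_nonneg_left (Real.rpow_nonneg hs0.le a) hlbpos hGlb
  -- rewrite the middle quantity
  have hsa : s ^ a = s ^ (n:ℕ) * s ^ (a - (n:ℝ)) := by
    rw [← Real.rpow_natCast s n, ← Real.rpow_add hs0]
    ring_nf
  have hcinv : ((n:ℝ)+2) ^ (a+1 - ((n:ℝ)+2)) = (((n:ℝ)+2) ^ (1 - (a - (n:ℝ))))⁻¹ := by
    rw [← Real.rpow_neg (by positivity)]
    ring_nf
  have hcpos : (0:ℝ) < ((n:ℝ)+2) ^ (1 - (a - (n:ℝ))) := by positivity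
  have hfpos : (0:ℝ) < ((n+1)! : ℝ) := by positivity
  have step2 : s ^ a / (((n+1)! : ℝ) * ((n:ℝ)+2) ^ (a+1 - ((n:ℝ)+2)))
      = s ^ (n:ℕ) * (s ^ (a - (n:ℝ)) * ((n:ℝ)+2) ^ (1 - (a - (n:ℝ)))) / ((n+1)! : ℝ) := by
    rw [hsa, hcinv]
    field_simp
  -- AM-GM
  have hamgm : s ^ (a - (n:ℝ)) * ((n:ℝ)+2) ^ (1 - (a - (n:ℝ)))
      ≤ s + ((n:ℝ)+2) := by
    have h := Real.geom_mean_le_arith_mean2_weighted (by linarith : (0:ℝ) ≤ a - n)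
      (by linarith : (0:ℝ) ≤ 1 - (a - (n:ℝ))) (le_of_lt hs0)
      (by positivity : (0:ℝ) ≤ (n:ℝ)+2) (by ring)
    nlinarith [h, hs0]
  have hpn : (0:ℝ) ≤ s ^ (n:ℕ) := by positivity
  have step3 : s ^ (n:ℕ) * (s ^ (a - (n:ℝ)) * ((n:ℝ)+2) ^ (1 - (a - (n:ℝ)))) / ((n+1)! : ℝ)
      ≤ s ^ (n:ℕ) * (s + ((n:ℝ)+2)) / ((n+1)! : ℝ) := by
    gcongr
  have hfac : ((n+1)! : ℝ) = ((n:ℝ)+1) * ((n)! : ℝ) := by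
    rw [Nat.factorial_succ]; push_cast; ring
  have hnfpos : (0:ℝ) < ((n)! : ℝ) := by positivity
  have hsplit : s ^ (n:ℕ) * (s + ((n:ℝ)+2)) / ((n+1)! : ℝ)
      = s ^ (n+1) / ((n+1)! : ℝ) + ((n:ℝ)+2) * s ^ n / ((n+1)! : ℝ) := by
    rw [pow_succ]; ring
  have hlast : ((n:ℝ)+2) * s ^ n / ((n+1)! : ℝ) ≤ 2 * s ^ n / ((n)! : ℝ) := by
    rw [hfac, div_le_div_iff₀ (by positivity) (by positivity)]
    nlinarith [mul_nonneg hpn hnfpos.le]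
  have step4 : s ^ (n:ℕ) * (s + ((n:ℝ)+2)) / ((n+1)! : ℝ)
      ≤ s ^ (n+1) / ((n+1)! : ℝ) + 2 * s ^ n / ((n)! : ℝ) := by
    rw [hsplit]
    have h0 : s ^ (n+1) / ((n+1)! : ℝ) ≤ s ^ (n+1) / ((n+1)! : ℝ) := le_refl _
    linarith [hlast]
  calc s ^ a / Real.Gamma (a+1) ≤ _ := step1
    _ = _ := step2
    _ ≤ _ := step3
    _ ≤ _ := step4

/-- Key finite-sum estimate: for `s ≥ 1`,
`∑_{k<N} s^(βk)/Γ(βk+ρ) ≤ (2⌈(1-ρ)/β⌉ + 3⌈1/β⌉) s^(1-ρ) e^s`. -/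
lemma key_sum (β ρ : ℝ) (hβ0 : 0 < β) (hβ1 : β < 1) (hρ : 0 < ρ) {s : ℝ} (hs : 1 ≤ s)
    (N : ℕ) :
    ∑ k ∈ Finset.range N, s ^ (β * (k:ℝ)) / Real.Gamma (β * k + ρ)
      ≤ (2 * (⌈(1-ρ)/β⌉₊ : ℝ) + 3 * (⌈β⁻¹⌉₊ : ℝ)) * s ^ (1-ρ) * Real.exp s := by
  have hs0 : (0:ℝ) < s := by linarith
  set K₀ : ℕ := ⌈(1-ρ)/β⌉₊ with hK₀
  set M : ℕ := ⌈β⁻¹⌉₊ with hM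
  have hM1 : 1 ≤ M := by
    rw [hM]
    exact Nat.one_le_iff_ne_zero.mpr (by positivity)
  have hMβ : 1 ≤ β * (M:ℝ) := by
    have h1 : β⁻¹ ≤ (M:ℝ) := Nat.le_ceil _
    calc (1:ℝ) = β * β⁻¹ := by field_simp
      _ ≤ β * M := by nlinarith
  have hexp1 : (1:ℝ) ≤ Real.exp s := by
    rw [← Real.exp_zero]; exact Real.exp_le_exp.mpr (by linarith)
  have hspos : (0:ℝ) < s ^ (1-ρ) := Real.rpow_pos_of_pos hs0 _
  -- split into bad and good
  rw [← Finset.sum_filter_add_sum_filter_not (Finset.range N) (fun k : ℕ => β * (k:ℝ) + ρ < 1)]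
  set B := (Finset.range N).filter (fun k : ℕ => β * (k:ℝ) + ρ < 1) with hB
  set G := (Finset.range N).filter (fun k : ℕ => ¬ (β * (k:ℝ) + ρ < 1)) with hG
  -- bad part
  have hbad : ∑ k ∈ B, s ^ (β * (k:ℝ)) / Real.Gamma (β * k + ρ)
      ≤ 2 * (K₀:ℝ) * s ^ (1-ρ) := by
    have hterm : ∀ k ∈ B, s ^ (β * (k:ℝ)) / Real.Gamma (β * k + ρ) ≤ 2 * s ^ (1-ρ) := by
      intro k hk
      rw [hB, Finset.mem_filter] at hk
      have hk1 : β * k + ρ < 1 := hk.2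
      have hkpos : 0 < β * k + ρ := by positivity
      have hG12 : (1/2:ℝ) ≤ Real.Gamma (β * k + ρ) := gamma_ge_half hkpos (le_of_lt hk1)
      have hnum : s ^ (β * (k:ℝ)) ≤ s ^ (1-ρ) :=
        Real.rpow_le_rpow_of_exponent_le hs (by linarith)
      calc s ^ (β * (k:ℝ)) / Real.Gamma (β * k + ρ)
          ≤ s ^ (1-ρ) / (1/2) :=
            div_le_div₀ (le_of_lt hspos) hnum (by norm_num) hG12
        _ = 2 * s ^ (1-ρ) := by ring
    have hcard : B.card ≤ K₀ := by
      have hsub : B ⊆ Finset.range K₀ := by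
        intro k hk
        rw [hB, Finset.mem_filter] at hk
        rw [Finset.mem_range]
        rw [hK₀]
        rw [Nat.lt_ceil]
        rw [lt_div_iff₀ hβ0]
        have := hk.2
        linarith [mul_comm β (k:ℝ)]
      calc B.card ≤ (Finset.range K₀).card := Finset.card_le_card hsub
        _ = K₀ := Finset.card_range K₀
    calc ∑ k ∈ B, s ^ (β * (k:ℝ)) / Real.Gamma (β * k + ρ)
        ≤ ∑ k ∈ B, 2 * s ^ (1-ρ) := Finset.sum_le_sum hterm
      _ = B.card * (2 * s ^ (1-ρ)) := by rw [Finset.sum_const, nsmul_eq_mul]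
      _ ≤ K₀ * (2 * s ^ (1-ρ)) := by
          have : (B.card : ℝ) ≤ (K₀ : ℝ) := Nat.cast_le.mpr hcard
          nlinarith [hspos]
      _ = 2 * (K₀:ℝ) * s ^ (1-ρ) := by ring
  -- good part
  have hgood : ∑ k ∈ G, s ^ (β * (k:ℝ)) / Real.Gamma (β * k + ρ)
      ≤ 3 * (M:ℝ) * s ^ (1-ρ) * Real.exp s := by
    set g : ℕ → ℝ := fun n => s ^ (n+1) / ((n+1)! : ℝ) + 2 * s ^ n / ((n)! : ℝ) with hg
    have hgnonneg : ∀ n, 0 ≤ g n := by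
      intro n
      rw [hg]
      positivity
    set nf : ℕ → ℕ := fun k : ℕ => ⌊β * (k:ℝ) + ρ - 1⌋₊ with hnf
    have hGa : ∀ k ∈ G, 0 ≤ β * (k:ℝ) + ρ - 1 := by
      intro k hk
      rw [hG, Finset.mem_filter] at hk
      have := hk.2
      push_neg at this
      linarith
    -- termwise bound on good terms
    have hterm : ∀ k ∈ G, s ^ (β * (k:ℝ)) / Real.Gamma (β * k + ρ)
        ≤ s ^ (1-ρ) * g (nf k) := by
      intro k hk
      have ha := hGa k hk
      have key := term_bound hs ha
      have hgam : (β * (k:ℝ) + ρ - 1) + 1 = β * (k:ℝ) + ρ := by ring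
      rw [hgam] at key
      have hsplit : s ^ (β * (k:ℝ)) = s ^ (1-ρ) * s ^ (β * (k:ℝ) + ρ - 1) := by
        rw [← Real.rpow_add hs0]
        ring_nf
      rw [hsplit, mul_div_assoc]
      refine mul_le_mul_of_nonneg_left ?_ (le_of_lt hspos)
      exact key
    -- counting: sum of g ∘ nf over G
    set N' : ℕ := ⌈β * N + ρ⌉₊ with hN'
    set fm : ℕ → ℕ × ℕ := fun k => (nf k, k % M) with hfm
    have hmono : ∀ j ∈ G, ∀ k ∈ G, j < k → j % M = k % M → nf j < nf k := by
      intro j hj k hk hjk hmod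
      have hjM : j + M ≤ k := by
        have hdvd : M ∣ k - j := (Nat.modEq_iff_dvd' (le_of_lt hjk)).mp hmod
        have hpos : 0 < k - j := by omega
        have := Nat.le_of_dvd hpos hdvd
        omega
      have haj := hGa j hj
      have h1 : β * (j:ℝ) + ρ - 1 + 1 ≤ β * (k:ℝ) + ρ - 1 := by
        have : (j:ℝ) + (M:ℝ) ≤ (k:ℝ) := by exact_mod_cast hjM
        nlinarith [hMβ, hβ0]
      have h2 : nf j + 1 ≤ nf k := by
        rw [hnf]
        calc ⌊β * (j:ℝ) + ρ - 1⌋₊ + 1 = ⌊(β * (j:ℝ) + ρ - 1) + 1⌋₊ := (Nat.floor_add_one haj).symm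
          _ ≤ ⌊β * (k:ℝ) + ρ - 1⌋₊ := Nat.floor_mono h1
      omega
    have hinj : ∀ j ∈ G, ∀ k ∈ G, fm j = fm k → j = k := by
      intro j hj k hk heq
      by_contra hne
      rw [hfm] at heq
      simp only [Prod.mk.injEq] at heq
      rcases Nat.lt_or_ge j k with h | h
      · exact absurd heq.1 (Nat.ne_of_lt (hmono j hj k hk h heq.2))
      · have hlt : k < j := by omega
        exact absurd heq.1.symm (Nat.ne_of_lt (hmono k hk j hj hlt heq.2.symm))
    have himg : G.image fm ⊆ Finset.range N' ×ˢ Finset.range M := by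
      intro p hp
      rw [Finset.mem_image] at hp
      obtain ⟨k, hk, hpk⟩ := hp
      rw [Finset.mem_product, ← hpk]
      constructor
      · rw [Finset.mem_range]
        have hkN : k < N := by
          rw [hG, Finset.mem_filter, Finset.mem_range] at hk
          exact hk.1
        have h1 : (nf k : ℝ) ≤ β * (k:ℝ) + ρ - 1 := Nat.floor_le (hGa k hk)
        have h2 : β * (k:ℝ) + ρ - 1 < β * (N:ℝ) + ρ := by
          have : (k:ℝ) < (N:ℝ) := by exact_mod_cast hkN
          nlinarith
        have h3 : β * (N:ℝ) + ρ ≤ (N' : ℝ) := Nat.le_ceil _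
        have : (nf k : ℝ) < (N' : ℝ) := by linarith
        exact_mod_cast this
      · rw [Finset.mem_range]
        exact Nat.mod_lt k (by omega)
    have hcount : ∑ k ∈ G, g (nf k) ≤ (M:ℝ) * ∑ n ∈ Finset.range N', g n := by
      have h1 : ∑ k ∈ G, g (nf k) = ∑ p ∈ G.image fm, g p.1 := by
        rw [Finset.sum_image hinj]
      rw [h1]
      have h2 : ∑ p ∈ G.image fm, g p.1 ≤ ∑ p ∈ Finset.range N' ×ˢ Finset.range M, g p.1 :=
        Finset.sum_le_sum_of_subset_of_nonneg himg (fun p _ _ => hgnonneg p.1)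
      have h3 : ∑ p ∈ Finset.range N' ×ˢ Finset.range M, g p.1
          = (M:ℝ) * ∑ n ∈ Finset.range N', g n := by
        rw [Finset.sum_product]
        simp only [Finset.sum_const, Finset.card_range, nsmul_eq_mul]
        rw [← Finset.mul_sum]
      linarith
    have hexpsum : ∑ n ∈ Finset.range N', g n ≤ 3 * Real.exp s := by
      have hsum1 : ∑ n ∈ Finset.range N', s ^ (n+1) / ((n+1)! : ℝ) ≤ Real.exp s := by
        have h := Real.sum_le_exp_of_nonneg (le_of_lt hs0) (N'+1)
        rw [Finset.sum_range_succ'] at h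
        have : (s ^ 0 / ((0)! : ℝ)) = 1 := by norm_num
        rw [this] at h
        linarith
      have hsum2 : ∑ n ∈ Finset.range N', s ^ n / ((n)! : ℝ) ≤ Real.exp s :=
        Real.sum_le_exp_of_nonneg (le_of_lt hs0) N'
      calc ∑ n ∈ Finset.range N', g n
          = (∑ n ∈ Finset.range N', s ^ (n+1) / ((n+1)! : ℝ))
            + 2 * ∑ n ∈ Finset.range N', s ^ n / ((n)! : ℝ) := by
            rw [hg, Finset.sum_add_distrib, Finset.mul_sum]
            congr 1
            exact Finset.sum_congr rfl fun i _ => mul_div_assoc (2:ℝ) _ _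
        _ ≤ Real.exp s + 2 * Real.exp s := by linarith
        _ = 3 * Real.exp s := by ring
    calc ∑ k ∈ G, s ^ (β * (k:ℝ)) / Real.Gamma (β * k + ρ)
        ≤ ∑ k ∈ G, s ^ (1-ρ) * g (nf k) := Finset.sum_le_sum hterm
      _ = s ^ (1-ρ) * ∑ k ∈ G, g (nf k) := by rw [Finset.mul_sum]
      _ ≤ s ^ (1-ρ) * ((M:ℝ) * (3 * Real.exp s)) := by
          have h4 : ∑ k ∈ G, g (nf k) ≤ (M:ℝ) * (3 * Real.exp s) := by
            have h5 : (M:ℝ) * ∑ n ∈ Finset.range N', g n ≤ (M:ℝ) * (3 * Real.exp s) := by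
              have hM0 : (0:ℝ) ≤ (M:ℝ) := Nat.cast_nonneg M
              nlinarith [hexpsum]
            linarith [hcount]
          exact mul_le_mul_of_nonneg_left h4 (le_of_lt hspos)
      _ = 3 * (M:ℝ) * s ^ (1-ρ) * Real.exp s := by ring
  have hK0 : (0:ℝ) ≤ (K₀:ℝ) := Nat.cast_nonneg _
  calc (∑ k ∈ B, s ^ (β * (k:ℝ)) / Real.Gamma (β * k + ρ))
        + ∑ k ∈ G, s ^ (β * (k:ℝ)) / Real.Gamma (β * k + ρ)
      ≤ 2 * (K₀:ℝ) * s ^ (1-ρ) + 3 * (M:ℝ) * s ^ (1-ρ) * Real.exp s := by linarith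
    _ ≤ 2 * (K₀:ℝ) * s ^ (1-ρ) * Real.exp s + 3 * (M:ℝ) * s ^ (1-ρ) * Real.exp s := by
        nlinarith [mul_nonneg (mul_nonneg (by linarith : (0:ℝ) ≤ 2*(K₀:ℝ)) hspos.le)
          (by linarith : (0:ℝ) ≤ Real.exp s - 1)]
    _ = (2 * (K₀:ℝ) + 3 * (M:ℝ)) * s ^ (1-ρ) * Real.exp s := by ring

lemma taux {t e : ℝ} (ht : 1 ≤ t) : t ^ e ≤ (2:ℝ) ^ |e| * (1+t) ^ e := by
  have ht0 : (0:ℝ) < t := lt_of_lt_of_le zero_lt_one ht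
  rcases le_or_gt 0 e with he | he
  · rw [abs_of_nonneg he]
    have h1 : t ^ e ≤ (1+t) ^ e := Real.rpow_le_rpow ht0.le (by linarith) he
    have h2 : (1:ℝ) ≤ (2:ℝ) ^ e := Real.one_le_rpow one_le_two he
    nlinarith [Real.rpow_nonneg (show (0:ℝ) ≤ 1+t by linarith) e,
      Real.rpow_nonneg ht0.le e]
  · rw [abs_of_neg he]
    have h1 : (1+t) ≤ 2*t := by linarith
    have h2 : ((2:ℝ)*t) ^ e ≤ (1+t) ^ e :=
      Real.rpow_le_rpow_of_nonpos (by linarith) h1 he.le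
    rw [Real.mul_rpow (by norm_num) ht0.le] at h2
    have h3 : (0:ℝ) < (2:ℝ) ^ (-e) := Real.rpow_pos_of_pos two_pos _
    have h4 : (2:ℝ)^(-e) * ((2:ℝ)^e * t^e) ≤ (2:ℝ)^(-e) * (1+t)^e :=
      mul_le_mul_of_nonneg_left h2 h3.le
    have h5 : (2:ℝ)^(-e) * (2:ℝ)^e = 1 := by
      rw [← Real.rpow_add two_pos]
      norm_num
    calc t ^ e = ((2:ℝ)^(-e) * (2:ℝ)^e) * t^e := by rw [h5]; ring
      _ = (2:ℝ)^(-e) * ((2:ℝ)^e * t^e) := by ring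
      _ ≤ (2:ℝ)^(-e) * (1+t)^e := h4

/-- For `β ∈ (0,1)` and `ρ > 0` there are `C₁, C₂ > 0` with
`|E_{β,ρ}(t)| ≤ C₁ (1+t)^{(1−ρ)/β} e^{t^{1/β}} + C₂/(1+t)` for all `t > 0`. -/
theorem mittagLeffler_growth_bound (β ρ : ℝ) (hβ0 : 0 < β) (hβ1 : β < 1) (hρ : 0 < ρ) :
    ∃ C₁ > (0:ℝ), ∃ C₂ > (0:ℝ), ∀ t > (0:ℝ),
      |mittagLeffler β ρ t| ≤
        C₁ * (1 + t) ^ ((1 - ρ) / β) * Real.exp (t ^ (1 / β)) + C₂ / (1 + t) := by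
  set K₀ : ℕ := ⌈(1-ρ)/β⌉₊ with hK₀
  set M : ℕ := ⌈β⁻¹⌉₊ with hM
  set C₀ : ℝ := 2 * (K₀:ℝ) + 3 * (M:ℝ) with hC₀def
  have hM1 : 1 ≤ M := by
    rw [hM]
    exact Nat.one_le_iff_ne_zero.mpr (by positivity)
  have hM1' : (1:ℝ) ≤ (M:ℝ) := by exact_mod_cast hM1
  have hK0 : (0:ℝ) ≤ (K₀:ℝ) := Nat.cast_nonneg _
  have hC₀ : 0 < C₀ := by rw [hC₀def]; linarith
  set ee : ℝ := (1-ρ)/β with hee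
  set Cab : ℝ := (2:ℝ) ^ |ee| with hCab
  have hCabpos : 0 < Cab := Real.rpow_pos_of_pos two_pos _
  refine ⟨C₀ * Cab, by positivity, 2 * C₀ * Real.exp 1, by positivity, ?_⟩
  intro t ht
  have h1t : (0:ℝ) < 1 + t := by linarith
  have hterm_nonneg : ∀ k : ℕ, 0 ≤ t ^ k / Real.Gamma (β * k + ρ) := by
    intro k
    have hΓ : 0 < Real.Gamma (β * k + ρ) := Real.Gamma_pos_of_pos (by positivity)
    positivity
  have habs : |mittagLeffler β ρ t| = mittagLeffler β ρ t :=
    abs_of_nonneg (tsum_nonneg hterm_nonneg)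
  rw [habs]
  have hRHS1 : 0 ≤ C₀ * Cab * (1+t) ^ ee * Real.exp (t ^ (1/β)) := by positivity
  simp only [mittagLeffler]
  rcases le_or_gt 1 t with hge | hlt
  · -- case t ≥ 1
    set sv : ℝ := t ^ (1/β) with hsv
    have hsv1 : 1 ≤ sv := Real.one_le_rpow hge (by positivity)
    have hteq : t ^ ee ≤ Cab * (1+t) ^ ee := taux hge
    have hsveq : sv ^ (1-ρ) = t ^ ee := by
      rw [hsv, ← Real.rpow_mul (le_of_lt ht)]
      congr 1
      rw [hee]
      field_simp
    have hconv : ∀ k : ℕ, (t:ℝ) ^ k = sv ^ (β * (k:ℝ)) := by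
      intro k
      rw [hsv, ← Real.rpow_natCast t k, ← Real.rpow_mul (le_of_lt ht)]
      congr 1
      field_simp
    have hsum : ∀ N : ℕ, ∑ k ∈ Finset.range N, t ^ k / Real.Gamma (β * k + ρ)
        ≤ C₀ * Cab * (1+t) ^ ee * Real.exp sv := by
      intro N
      have h1 : ∑ k ∈ Finset.range N, t ^ k / Real.Gamma (β * k + ρ)
          = ∑ k ∈ Finset.range N, sv ^ (β * (k:ℝ)) / Real.Gamma (β * k + ρ) :=
        Finset.sum_congr rfl fun k _ => by rw [hconv k]
      have h2 := key_sum β ρ hβ0 hβ1 hρ hsv1 N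
      rw [h1]
      calc ∑ k ∈ Finset.range N, sv ^ (β * (k:ℝ)) / Real.Gamma (β * k + ρ)
          ≤ C₀ * sv ^ (1-ρ) * Real.exp sv := h2
        _ = C₀ * (t ^ ee) * Real.exp sv := by rw [hsveq]
        _ ≤ C₀ * (Cab * (1+t) ^ ee) * Real.exp sv := by
            have h3 := mul_le_mul_of_nonneg_left hteq hC₀.le
            have h4 := Real.exp_pos sv
            nlinarith
        _ = C₀ * Cab * (1+t) ^ ee * Real.exp sv := by ring
    have htsum := Real.tsum_le_of_sum_range_le hterm_nonneg hsum
    exact le_trans htsum (le_add_of_nonneg_right (by positivity))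
  · -- case t < 1
    have hsum : ∀ N : ℕ, ∑ k ∈ Finset.range N, t ^ k / Real.Gamma (β * k + ρ)
        ≤ C₀ * Real.exp 1 := by
      intro N
      have h2 := key_sum β ρ hβ0 hβ1 hρ (le_refl (1:ℝ)) N
      simp only [Real.one_rpow, mul_one] at h2
      have h1 : ∑ k ∈ Finset.range N, t ^ k / Real.Gamma (β * k + ρ)
          ≤ ∑ k ∈ Finset.range N, (1:ℝ) / Real.Gamma (β * k + ρ) := by
        apply Finset.sum_le_sum
        intro k _
        have hΓ : 0 < Real.Gamma (β * k + ρ) := Real.Gamma_pos_of_pos (by positivity)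
        exact div_le_div₀ zero_le_one (pow_le_one₀ (le_of_lt ht) (le_of_lt hlt)) hΓ le_rfl
      linarith
    have htsum := Real.tsum_le_of_sum_range_le hterm_nonneg hsum
    have hC2 : C₀ * Real.exp 1 ≤ 2 * C₀ * Real.exp 1 / (1+t) := by
      rw [le_div_iff₀ h1t]
      nlinarith [mul_nonneg (mul_nonneg hC₀.le (Real.exp_pos 1).le)
        (by linarith : (0:ℝ) ≤ 1 - t)]
    refine le_trans (le_trans htsum hC2) (le_add_of_nonneg_left hRHS1)
end

section
/- Let β ∈ (0,1), ρ > 0, a ∈ ℝ, and set y_{β,ρ}(t) = t^{ρ−1} E_{β,ρ}(a t^β). Then for every real λ > 0 with λ^β > |a|, the Laplace transform of y_{β,ρ} is defined and satisfies L[y_{β,ρ}](λ) = ∫₀^∞ t^{ρ−1} E_{β,ρ}(a t^β) e^{−λt} dt = λ^{β−ρ} / (λ^β − a). -/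
open MeasureTheory ENNReal NNReal Real Set

lemma integrable_tsum_aux {α : Type*} [MeasurableSpace α] {μ : Measure α}
    {F : ℕ → α → ℝ} (hF_int : ∀ i, Integrable (F i) μ)
    (hF_sum : Summable fun i => ∫ a, ‖F i a‖ ∂μ) :
    Integrable (fun a => ∑' i, F i a) μ := by
  have hmeas : ∀ i, AEStronglyMeasurable (F i) μ := fun i => (hF_int i).aestronglyMeasurable
  have h0 : ∀ i, 0 ≤ ∫ a, ‖F i a‖ ∂μ := fun i => integral_nonneg fun a => norm_nonneg _
  have h1 : ∑' i, ∫⁻ a, ‖F i a‖₊ ∂μ ≠ ∞ := by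
    have : ∀ i, ∫⁻ a, ‖F i a‖₊ ∂μ = ENNReal.ofReal (∫ a, ‖F i a‖ ∂μ) := fun i =>
      (ofReal_integral_norm_eq_lintegral_enorm (hF_int i)).symm
    rw [funext this, ← ENNReal.ofReal_tsum_of_nonneg h0 hF_sum]
    exact ENNReal.ofReal_ne_top
  have hf'' : ∀ i, AEMeasurable (fun x => (‖F i x‖₊ : ℝ≥0∞)) μ := fun i => (hmeas i).enorm
  have hlt : ∫⁻ a, ∑' i, (‖F i a‖₊ : ℝ≥0∞) ∂μ ≠ ∞ := by
    rwa [lintegral_tsum hf'']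
  have hhh : ∀ᵐ a ∂μ, Summable fun i => (‖F i a‖₊ : ℝ) := by
    refine (ae_lt_top' (AEMeasurable.ennreal_tsum hf'') hlt).mono fun x hx => ?_
    rw [← ENNReal.tsum_coe_ne_top_iff_summable_coe]
    exact hx.ne
  constructor
  · refine aestronglyMeasurable_of_tendsto_ae (f := fun n a => ∑ i ∈ Finset.range n, F i a)
      Filter.atTop (fun n => Finset.aestronglyMeasurable_fun_sum _ fun i _ => hmeas i) ?_
    filter_upwards [hhh] with x hx
    exact hx.of_norm.hasSum.tendsto_sum_nat
  · rw [HasFiniteIntegral]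
    calc ∫⁻ a, (‖∑' i, F i a‖₊ : ℝ≥0∞) ∂μ
        ≤ ∫⁻ a, ∑' i, (‖F i a‖₊ : ℝ≥0∞) ∂μ := by
          refine lintegral_mono_ae ?_
          filter_upwards [hhh] with x hx
          have := nnnorm_tsum_le (NNReal.summable_coe.mp hx)
          calc (‖∑' i, F i x‖₊ : ℝ≥0∞) ≤ (((∑' i, ‖F i x‖₊) : ℝ≥0) : ℝ≥0∞) := by
                exact_mod_cast this
            _ = ∑' i, (‖F i x‖₊ : ℝ≥0∞) := ENNReal.coe_tsum (NNReal.summable_coe.mp hx)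
      _ < ∞ := hlt.lt_top

/-- For `β ∈ (0,1)`, `ρ > 0`, `a ∈ ℝ`, and `y_{β,ρ}(t) = t^{ρ−1} E_{β,ρ}(a t^β)`,
the Laplace transform of `y_{β,ρ}` is defined for every real `λ > 0` with
`λ^β > |a|` and `L[y_{β,ρ}](λ) = λ^{β−ρ}/(λ^β − a)`. -/
theorem mittagLeffler_laplace (β ρ a : ℝ) (hβ0 : 0 < β) (hβ1 : β < 1) (hρ : 0 < ρ) :
    ∀ l > (0:ℝ), |a| < l ^ β →
      MeasureTheory.IntegrableOn
        (fun t : ℝ => t ^ (ρ - 1) * mittagLeffler β ρ (a * t ^ β) * Real.exp (-l * t))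
        (Set.Ioi 0) ∧
      (∫ t in Set.Ioi (0:ℝ),
          t ^ (ρ - 1) * mittagLeffler β ρ (a * t ^ β) * Real.exp (-l * t))
        = l ^ (β - ρ) / (l ^ β - a) := by
  simp only [mittagLeffler]
  intro l hl ha
  have hlβ : (0:ℝ) < l ^ β := lt_of_le_of_lt (abs_nonneg a) ha
  set F : ℕ → ℝ → ℝ := fun k t => a ^ k / Real.Gamma (β * k + ρ) *
    (t ^ (β * k + ρ - 1) * Real.exp (-(l * t))) with hF
  have hs : ∀ k : ℕ, (0:ℝ) < β * k + ρ := fun k => by positivity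
  have hΓ : ∀ k : ℕ, (0:ℝ) < Real.Gamma (β * k + ρ) := fun k => Real.Gamma_pos_of_pos (hs k)
  -- integrability of each term
  have hF_int : ∀ k, IntegrableOn (F k) (Ioi 0) := by
    intro k
    have hbase : IntegrableOn (fun t : ℝ => t ^ (β * k + ρ - 1) * Real.exp (-(l * t))) (Ioi 0) := by
      have := integrableOn_rpow_mul_exp_neg_mul_rpow (s := β * k + ρ - 1) (p := 1)
        (by linarith [hs k]) one_pos hl
      simpa [Real.rpow_one, neg_mul] using this
    exact hbase.const_mul _
  -- value of each integral
  have hval : ∀ k, ∫ t in Ioi (0:ℝ), F k t = a ^ k * (1 / l) ^ (β * k + ρ) := by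
    intro k
    rw [hF]
    simp only
    rw [MeasureTheory.integral_const_mul, integral_rpow_mul_exp_neg_mul_Ioi (hs k) hl]
    field_simp
  -- value of each norm integral
  have hnval : ∀ k, ∫ t in Ioi (0:ℝ), ‖F k t‖ = (|a| * (1 / l) ^ β) ^ k * (1 / l) ^ ρ := by
    intro k
    have heq : ∀ t ∈ Ioi (0:ℝ), ‖F k t‖ =
        |a| ^ k / Real.Gamma (β * k + ρ) * (t ^ (β * k + ρ - 1) * Real.exp (-(l * t))) := by
      intro t ht
      rw [hF]
      simp only [norm_mul, norm_div, Real.norm_eq_abs, abs_pow, abs_of_pos (hΓ k),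
        abs_of_nonneg (Real.rpow_nonneg (le_of_lt ht) _), abs_of_pos (Real.exp_pos _)]
    rw [setIntegral_congr_fun measurableSet_Ioi heq, MeasureTheory.integral_const_mul,
      integral_rpow_mul_exp_neg_mul_Ioi (hs k) hl]
    have h1l : (0:ℝ) ≤ 1 / l := by positivity
    have hpow : (1/l:ℝ) ^ (β * (k:ℝ)) = ((1/l:ℝ) ^ β) ^ k := by
      rw [← Real.rpow_natCast ((1/l:ℝ) ^ β) k, ← Real.rpow_mul h1l]
    rw [Real.rpow_add (by positivity : (0:ℝ) < 1/l), hpow]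
    field_simp
    ring
  -- summability of the norm integrals
  have hinvβ : (1 / l : ℝ) ^ β = (l ^ β)⁻¹ := by
    rw [one_div, ← Real.inv_rpow (le_of_lt hl)]
  have hr : |a| * (1 / l) ^ β < 1 := by
    rw [hinvβ, inv_eq_one_div, mul_one_div, div_lt_one hlβ]
    exact ha
  have hr0 : 0 ≤ |a| * (1 / l) ^ β := by positivity
  have hF_sum : Summable fun k => ∫ t in Ioi (0:ℝ), ‖F k t‖ := by
    simp_rw [hnval]
    exact (summable_geometric_of_lt_one hr0 hr).mul_right _
  -- pointwise identity
  have hpt : ∀ t ∈ Ioi (0:ℝ), ∑' k, F k t =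
      t ^ (ρ - 1) * (∑' k : ℕ, (a * t ^ β) ^ k / Real.Gamma (β * k + ρ)) * Real.exp (-l * t) := by
    intro t ht
    have ht' : (0:ℝ) < t := ht
    have h1 : ∀ k : ℕ, F k t =
        (a * t ^ β) ^ k / Real.Gamma (β * k + ρ) * (t ^ (ρ - 1) * Real.exp (-l * t)) := by
      intro k
      have hb : t ^ (β * k + ρ - 1) = (t ^ β) ^ k * t ^ (ρ - 1) := by
        rw [← Real.rpow_natCast (t ^ β) k, ← Real.rpow_mul (le_of_lt ht'),
          ← Real.rpow_add ht']
        ring_nf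
      rw [hF]
      simp only [hb, mul_pow, neg_mul]
      ring
    rw [tsum_congr h1, _root_.tsum_mul_right]
    ring
  -- interchange
  have hint : Integrable (fun t => ∑' k, F k t) (volume.restrict (Ioi 0)) :=
    integrable_tsum_aux hF_int hF_sum
  have hswap : ∑' k, ∫ t in Ioi (0:ℝ), F k t = ∫ t in Ioi (0:ℝ), ∑' k, F k t :=
    integral_tsum_of_summable_integral_norm hF_int hF_sum
  constructor
  · exact MeasureTheory.IntegrableOn.congr_fun hint hpt measurableSet_Ioi
  · rw [← setIntegral_congr_fun measurableSet_Ioi hpt, ← hswap]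
    simp_rw [hval]
    have h1l : (0:ℝ) ≤ 1 / l := by positivity
    have hsplit : ∀ k : ℕ, a ^ k * (1 / l) ^ (β * k + ρ)
        = (a * (1 / l) ^ β) ^ k * (1 / l) ^ ρ := by
      intro k
      have hpow : (1/l:ℝ) ^ (β * (k:ℝ)) = ((1/l:ℝ) ^ β) ^ k := by
        rw [← Real.rpow_natCast ((1/l:ℝ) ^ β) k, ← Real.rpow_mul h1l]
      rw [Real.rpow_add (by positivity : (0:ℝ) < 1/l), hpow, mul_pow]
      ring
    simp_rw [hsplit]
    rw [_root_.tsum_mul_right, tsum_geometric_of_norm_lt_one (by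
      rw [Real.norm_eq_abs, abs_mul, abs_of_nonneg (Real.rpow_nonneg h1l β)]; exact hr)]
    have hinvρ : (1 / l : ℝ) ^ ρ = (l ^ ρ)⁻¹ := by
      rw [one_div, ← Real.inv_rpow (le_of_lt hl)]
    have hβρ : l ^ (β - ρ) = l ^ β * (l ^ ρ)⁻¹ := by
      rw [show β - ρ = β + (-ρ) by ring, Real.rpow_add hl, Real.rpow_neg (le_of_lt hl)]
    have hne : l ^ β - a ≠ 0 := by
      have : a < l ^ β := lt_of_le_of_lt (le_abs_self a) ha
      linarith
    rw [hinvβ, hinvρ, hβρ]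
    have hβne : (l ^ β : ℝ) ≠ 0 := ne_of_gt hlβ
    have hρne : (l ^ ρ : ℝ) ≠ 0 := ne_of_gt (Real.rpow_pos_of_pos hl ρ)
    rw [eq_div_iff hne]
    have h2 : (1 - a * (l ^ β)⁻¹) = (l ^ β - a) * (l ^ β)⁻¹ := by
      field_simp
    rw [h2, mul_inv, inv_inv]
    field_simp
end

section
/- Let β ∈ (0,1), ρ > 0, γ > 0, and a ∈ ℝ. Then for every t > 0, (1/Γ(γ)) ∫₀ᵗ (t−s)^{γ−1} s^{ρ−1} E_{β,ρ}(a s^β) ds = t^{ρ+γ−1} E_{β,ρ+γ}(a t^β). -/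
open Real MeasureTheory Set Filter Topology intervalIntegral


lemma gautschi {β : ℝ} (hβ0 : 0 < β) (hβ1 : β < 1) {x : ℝ} (hx : 0 < x) :
    x * Real.Gamma x ≤ Real.Gamma (x + β) * (x + β) ^ (1 - β) := by
  have hxβ : 0 < x + β := by linarith
  have hxβ1 : 0 < x + β + 1 := by linarith
  have h := Real.convexOn_log_Gamma.2 (mem_Ioi.2 hxβ) (mem_Ioi.2 hxβ1)
    hβ0.le (by linarith : (0:ℝ) ≤ 1 - β) (by ring)
  have harg : β • (x + β) + (1 - β) • (x + β + 1) = x + 1 := by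
    simp only [smul_eq_mul]; ring
  rw [harg] at h
  have hG1 : Real.Gamma (x + 1) = x * Real.Gamma x := Real.Gamma_add_one hx.ne'
  have hG2 : Real.Gamma (x + β + 1) = (x + β) * Real.Gamma (x + β) :=
    Real.Gamma_add_one hxβ.ne'
  have hp : ∀ y : ℝ, 0 < y → Real.log (Real.Gamma y) = Real.log (Real.Gamma y) := fun _ _ => rfl
  have hGx : 0 < Real.Gamma x := Real.Gamma_pos_of_pos hx
  have hGxβ : 0 < Real.Gamma (x + β) := Real.Gamma_pos_of_pos hxβ
  have key : Real.log (x * Real.Gamma x) ≤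
      Real.log (Real.Gamma (x + β) * (x + β) ^ (1 - β)) := by
    have h2 : Real.log (Real.Gamma (x + 1)) ≤
        β * Real.log (Real.Gamma (x + β)) + (1 - β) * Real.log (Real.Gamma (x + β + 1)) := h
    rw [hG1, hG2, Real.log_mul hxβ.ne' hGxβ.ne'] at h2
    rw [Real.log_mul hGxβ.ne' (Real.rpow_pos_of_pos hxβ _).ne', Real.log_rpow hxβ]
    nlinarith [h2]
  exact (Real.log_le_log_iff (by positivity) (by positivity)).1 key

lemma ml_summable {β c : ℝ} (hβ0 : 0 < β) (hβ1 : β < 1) (hc : 0 < c) (z : ℝ) :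
    Summable (fun k : ℕ => z ^ k / Real.Gamma (β * k + c)) := by
  apply summable_of_ratio_norm_eventually_le (r := 1/2) (by norm_num)
  -- auxiliary tendsto
  have haux : Tendsto (fun x : ℝ => (x + β) ^ (1 - β) / x) atTop (𝓝 0) := by
    have hup : Tendsto (fun x : ℝ => 2 ^ (1 - β) * x ^ (-β)) atTop (𝓝 0) := by
      simpa using (tendsto_rpow_neg_atTop hβ0).const_mul ((2:ℝ) ^ (1 - β))
    refine tendsto_of_tendsto_of_tendsto_of_le_of_le' tendsto_const_nhds hup ?_ ?_
    · filter_upwards [eventually_gt_atTop 0] with x hx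
      positivity
    · filter_upwards [eventually_ge_atTop (max β 1)] with x hx
      have hx1 : (1:ℝ) ≤ x := le_trans (le_max_right _ _) hx
      have hxβ : β ≤ x := le_trans (le_max_left _ _) hx
      have hx0 : 0 < x := by linarith
      have h1 : (x + β) ^ (1 - β) ≤ (2 * x) ^ (1 - β) :=
        Real.rpow_le_rpow (by linarith) (by linarith) (by linarith)
      have h2 : (2 * x) ^ (1 - β) = 2 ^ (1 - β) * x ^ (1 - β) :=
        Real.mul_rpow (by norm_num) hx0.le
      have h3 : x ^ (1 - β) / x = x ^ (-β) := by
        rw [show (1 - β : ℝ) = -β + 1 by ring, Real.rpow_add hx0, Real.rpow_one]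
        field_simp
      calc (x + β) ^ (1 - β) / x ≤ (2 ^ (1 - β) * x ^ (1 - β)) / x := by
            rw [← h2]; gcongr
        _ = 2 ^ (1 - β) * x ^ (-β) := by rw [mul_div_assoc, h3]
  have hxk : Tendsto (fun k : ℕ => β * k + c) atTop atTop :=
    tendsto_atTop_add_const_right _ c
      ((tendsto_natCast_atTop_atTop (R := ℝ)).const_mul_atTop hβ0)
  have hεpos : 0 < 1 / (2 * (|z| + 1)) := by positivity
  have hev : ∀ᶠ k : ℕ in atTop,
      ((β * k + c) + β) ^ (1 - β) / (β * k + c) < 1 / (2 * (|z| + 1)) := by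
    have := (haux.comp hxk).eventually_lt_const hεpos
    simpa using this
  filter_upwards [hev] with k hk
  set x : ℝ := β * k + c with hxdef
  have hx0 : 0 < x := by positivity
  have hGx : 0 < Real.Gamma x := Real.Gamma_pos_of_pos hx0
  have hGxβ : 0 < Real.Gamma (x + β) := Real.Gamma_pos_of_pos (by linarith)
  have hek : β * (k + 1 : ℕ) + c = x + β := by push_cast [hxdef]; ring
  rw [hek]
  have hnorm1 : ‖z ^ (k+1) / Real.Gamma (x + β)‖ = |z| ^ (k+1) / Real.Gamma (x + β) := by
    rw [norm_div, norm_pow, Real.norm_eq_abs, Real.norm_eq_abs, abs_of_pos hGxβ]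
  have hnorm2 : ‖z ^ k / Real.Gamma x‖ = |z| ^ k / Real.Gamma x := by
    rw [norm_div, norm_pow, Real.norm_eq_abs, Real.norm_eq_abs, abs_of_pos hGx]
  rw [hnorm1, hnorm2]
  -- key: 2 * |z| * Gamma x ≤ Gamma (x + β)
  have hg := gautschi hβ0 hβ1 hx0
  have hkey : 2 * |z| * Real.Gamma x ≤ Real.Gamma (x + β) := by
    have hrp : (0:ℝ) ≤ (x + β) ^ (1 - β) := Real.rpow_nonneg (by linarith) _
    have h1 : Real.Gamma x ≤ Real.Gamma (x + β) * ((x + β) ^ (1 - β) / x) := by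
      rw [mul_div_assoc'] at *
      exact (le_div_iff₀ hx0).2 (by nlinarith)
    have h2 : (x + β) ^ (1 - β) / x ≤ 1 / (2 * (|z| + 1)) := hk.le
    have h3 : Real.Gamma x ≤ Real.Gamma (x + β) / (2 * (|z| + 1)) := by
      calc Real.Gamma x ≤ Real.Gamma (x + β) * ((x + β) ^ (1 - β) / x) := h1
        _ ≤ Real.Gamma (x + β) * (1 / (2 * (|z| + 1))) := by
            exact mul_le_mul_of_nonneg_left h2 hGxβ.le
        _ = Real.Gamma (x + β) / (2 * (|z| + 1)) := by ring
    have habs : (0:ℝ) ≤ |z| := abs_nonneg z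
    have h5 : Real.Gamma x * (2 * (|z| + 1)) ≤ Real.Gamma (x + β) :=
      (le_div_iff₀ (by positivity)).1 h3
    nlinarith [h5, hGx]
  have h4 : |z| ≤ Real.Gamma (x + β) / (2 * Real.Gamma x) := by
    rw [le_div_iff₀ (by positivity)]
    nlinarith [hkey]
  rw [pow_succ]
  calc |z| ^ k * |z| / Real.Gamma (x + β)
      ≤ |z| ^ k * (Real.Gamma (x + β) / (2 * Real.Gamma x)) / Real.Gamma (x + β) := by
        gcongr
    _ = 1 / 2 * (|z| ^ k / Real.Gamma x) := by field_simp
lemma beta_integrable {u v t : ℝ} (hu : 0 < u) (hv : 0 < v) (ht : 0 < t) :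
    IntervalIntegrable (fun s => s ^ (u - 1) * (t - s) ^ (v - 1)) volume 0 t := by
  have h1 : IntervalIntegrable (fun s : ℝ => s ^ (u - 1)) volume 0 (t / 2) :=
    intervalIntegrable_rpow' (by linarith)
  have hc1 : ContinuousOn (fun s : ℝ => (t - s) ^ (v - 1)) (Set.uIcc 0 (t / 2)) := by
    apply ContinuousOn.rpow_const ((continuous_const.sub continuous_id).continuousOn)
    intro s hs
    rw [Set.uIcc_of_le (by linarith : (0:ℝ) ≤ t / 2)] at hs
    refine Or.inl ?_
    have h1 := hs.1
    have h2 := hs.2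
    simp only [Pi.sub_apply, id_eq]
    intro h
    nlinarith
  have part1 : IntervalIntegrable (fun s => s ^ (u - 1) * (t - s) ^ (v - 1)) volume 0 (t / 2) :=
    h1.mul_continuousOn hc1
  have h2 : IntervalIntegrable (fun s : ℝ => (t - s) ^ (v - 1)) volume (t / 2) t := by
    have := (intervalIntegrable_rpow' (a := 0) (b := t / 2) (by linarith : (-1:ℝ) < v - 1)).comp_sub_left t
    simpa [sub_zero, show t - t / 2 = t / 2 by ring] using this.symm
  have hc2 : ContinuousOn (fun s : ℝ => s ^ (u - 1)) (Set.uIcc (t / 2) t) := by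
    apply ContinuousOn.rpow_const continuousOn_id
    intro s hs
    rw [Set.uIcc_of_le (by linarith : t / 2 ≤ t)] at hs
    exact Or.inl (by simp only [id]; nlinarith [hs.1])
  have part2 : IntervalIntegrable (fun s => s ^ (u - 1) * (t - s) ^ (v - 1)) volume (t / 2) t :=
    h2.continuousOn_mul hc2
  exact part1.trans part2

lemma beta_integral_eval {u v t : ℝ} (hu : 0 < u) (hv : 0 < v) (ht : 0 < t) :
    ∫ s in (0:ℝ)..t, s ^ (u - 1) * (t - s) ^ (v - 1)
      = Real.Gamma u * Real.Gamma v / Real.Gamma (u + v) * t ^ (u + v - 1) := by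
  have hGuv : (0:ℝ) < Real.Gamma (u + v) := Real.Gamma_pos_of_pos (by linarith)
  have hbs := Complex.betaIntegral_scaled (u : ℂ) (v : ℂ) ht
  have hGG := Complex.Gamma_mul_Gamma_eq_betaIntegral
    (by simpa using hu : 0 < (u:ℂ).re) (by simpa using hv : 0 < (v:ℂ).re)
  -- complex integral equals ofReal of the real integral
  have hcongr : ∫ x in (0:ℝ)..t, (x:ℂ) ^ ((u:ℂ) - 1) * ((t:ℂ) - (x:ℂ)) ^ ((v:ℂ) - 1)
      = ((∫ s in (0:ℝ)..t, s ^ (u - 1) * (t - s) ^ (v - 1) : ℝ) : ℂ) := by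
    rw [← intervalIntegral.integral_ofReal]
    apply intervalIntegral.integral_congr
    intro x hx
    rw [Set.uIcc_of_le ht.le] at hx
    have hx0 : (0:ℝ) ≤ x := hx.1
    have hxt : (0:ℝ) ≤ t - x := by linarith [hx.2]
    simp only [Complex.ofReal_mul]
    rw [Complex.ofReal_cpow hx0, Complex.ofReal_cpow hxt]
    push_cast
    ring
  have hGne : Complex.Gamma ((u:ℂ) + (v:ℂ)) ≠ 0 := by
    rw [show ((u:ℂ) + (v:ℂ)) = ((u + v : ℝ) : ℂ) by push_cast; ring, Complex.Gamma_ofReal]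
    exact_mod_cast hGuv.ne'
  have hbeta : Complex.betaIntegral u v
      = Complex.Gamma u * Complex.Gamma v / Complex.Gamma ((u:ℂ) + (v:ℂ)) := by
    rw [eq_div_iff hGne]
    linear_combination -hGG
  rw [hcongr, hbeta] at hbs
  have hrhs : ((t:ℂ)) ^ ((u:ℂ) + (v:ℂ) - 1)
      * (Complex.Gamma u * Complex.Gamma v / Complex.Gamma ((u:ℂ) + (v:ℂ)))
      = ((Real.Gamma u * Real.Gamma v / Real.Gamma (u + v) * t ^ (u + v - 1) : ℝ) : ℂ) := by
    rw [show ((u:ℂ) + (v:ℂ) - 1) = ((u + v - 1 : ℝ) : ℂ) by push_cast; ring,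
      ← Complex.ofReal_cpow ht.le,
      show ((u:ℂ) + (v:ℂ)) = ((u + v : ℝ) : ℂ) by push_cast; ring]
    rw [Complex.Gamma_ofReal, Complex.Gamma_ofReal, Complex.Gamma_ofReal]
    push_cast
    ring
  rw [hrhs] at hbs
  exact_mod_cast hbs


/-- For `β ∈ (0,1)`, `ρ > 0`, `γ > 0`, `a ∈ ℝ`, and every `t > 0`,
`(1/Γ(γ)) ∫₀ᵗ (t−s)^{γ−1} s^{ρ−1} E_{β,ρ}(a s^β) ds = t^{ρ+γ−1} E_{β,ρ+γ}(a t^β)`. -/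
theorem mittagLeffler_convolution (β ρ γ a : ℝ)
    (hβ0 : 0 < β) (hβ1 : β < 1) (hρ : 0 < ρ) (hγ : 0 < γ) :
    ∀ t > (0:ℝ),
      (1 / Real.Gamma γ) *
          ∫ s in (0:ℝ)..t, (t - s) ^ (γ - 1) * (s ^ (ρ - 1) * mittagLeffler β ρ (a * s ^ β))
        = t ^ (ρ + γ - 1) * mittagLeffler β (ρ + γ) (a * t ^ β) := by
  intro t ht
  have hGγ : (0:ℝ) < Real.Gamma γ := Real.Gamma_pos_of_pos hγ
  set F : ℕ → ℝ → ℝ :=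
    fun k s => (a ^ k / Real.Gamma (β * k + ρ)) * (s ^ (β * k + ρ - 1) * (t - s) ^ (γ - 1))
    with hF
  have hpos : ∀ k : ℕ, (0:ℝ) < β * k + ρ := by
    intro k; positivity
  have hGk : ∀ k : ℕ, (0:ℝ) < Real.Gamma (β * k + ρ) := fun k => Real.Gamma_pos_of_pos (hpos k)
  have hGkγ : ∀ k : ℕ, (0:ℝ) < Real.Gamma (β * k + ρ + γ) :=
    fun k => Real.Gamma_pos_of_pos (by linarith [hpos k])
  -- integrability of each term
  have hFint : ∀ k : ℕ, IntegrableOn (F k) (Ioc 0 t) volume := by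
    intro k
    exact ((beta_integrable (hpos k) hγ ht).1.const_mul _)
  -- value of each integral
  have hIval : ∀ k : ℕ, ∫ s in Ioc (0:ℝ) t, s ^ (β * k + ρ - 1) * (t - s) ^ (γ - 1)
      = Real.Gamma (β * k + ρ) * Real.Gamma γ / Real.Gamma (β * k + ρ + γ)
          * t ^ (β * k + ρ + γ - 1) := by
    intro k
    rw [← intervalIntegral.integral_of_le ht.le]
    exact beta_integral_eval (hpos k) hγ ht
  have hFval : ∀ k : ℕ, ∫ s in Ioc (0:ℝ) t, F k s
      = (a ^ k / Real.Gamma (β * k + ρ)) *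
          (Real.Gamma (β * k + ρ) * Real.Gamma γ / Real.Gamma (β * k + ρ + γ)
            * t ^ (β * k + ρ + γ - 1)) := by
    intro k
    rw [hF]
    rw [MeasureTheory.integral_const_mul, hIval k]
  -- power identity
  have hpow : ∀ z : ℝ, 0 < z → ∀ k : ℕ, z ^ (β * k + ρ + γ - 1)
      = (z ^ β) ^ k * z ^ (ρ + γ - 1) := by
    intro z hz k
    rw [← Real.rpow_natCast (z ^ β) k, ← Real.rpow_mul hz.le, ← Real.rpow_add hz]
    ring_nf
  -- summability of integral norms
  have hnormint : ∀ k : ℕ, ∫ s in Ioc (0:ℝ) t, ‖F k s‖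
      = (|a| ^ k / Real.Gamma (β * k + ρ)) *
          (Real.Gamma (β * k + ρ) * Real.Gamma γ / Real.Gamma (β * k + ρ + γ)
            * t ^ (β * k + ρ + γ - 1)) := by
    intro k
    have : ∀ s ∈ Ioc (0:ℝ) t, ‖F k s‖
        = (|a| ^ k / Real.Gamma (β * k + ρ)) * (s ^ (β * k + ρ - 1) * (t - s) ^ (γ - 1)) := by
      intro s hs
      have hs0 : 0 < s := hs.1
      have hst : 0 ≤ t - s := by linarith [hs.2]
      rw [hF]
      rw [Real.norm_eq_abs, abs_mul, abs_div, abs_pow, abs_of_pos (hGk k), abs_mul,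
        abs_of_nonneg (Real.rpow_nonneg hs0.le _), abs_of_nonneg (Real.rpow_nonneg hst _)]
    rw [MeasureTheory.setIntegral_congr_fun measurableSet_Ioc this,
      MeasureTheory.integral_const_mul, hIval k]
  have hsummand : ∀ k : ℕ, (|a| ^ k / Real.Gamma (β * k + ρ)) *
          (Real.Gamma (β * k + ρ) * Real.Gamma γ / Real.Gamma (β * k + ρ + γ)
            * t ^ (β * k + ρ + γ - 1))
      = (Real.Gamma γ * t ^ (ρ + γ - 1)) * ((|a| * t ^ β) ^ k / Real.Gamma (β * k + (ρ + γ))) := by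
    intro k
    rw [hpow t ht k, mul_pow]
    have h1 : β * k + ρ + γ = β * k + (ρ + γ) := by ring
    rw [h1]
    field_simp
  have hsum_norm : Summable (fun k : ℕ => ∫ s in Ioc (0:ℝ) t, ‖F k s‖) := by
    have hml := (ml_summable hβ0 hβ1 (by linarith : (0:ℝ) < ρ + γ) (|a| * t ^ β)).mul_left
      (Real.Gamma γ * t ^ (ρ + γ - 1))
    refine hml.congr fun k => ?_
    rw [hnormint k, hsummand k]
  -- swap sum and integral
  have hswap : ∑' k, ∫ s in Ioc (0:ℝ) t, F k s = ∫ s in Ioc (0:ℝ) t, ∑' k, F k s :=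
    MeasureTheory.integral_tsum_of_summable_integral_norm hFint hsum_norm
  -- pointwise identity on Ioc 0 t
  have hptwise : ∀ s ∈ Ioc (0:ℝ) t,
      (t - s) ^ (γ - 1) * (s ^ (ρ - 1) * mittagLeffler β ρ (a * s ^ β)) = ∑' k, F k s := by
    intro s hs
    have hs0 : 0 < s := hs.1
    rw [mittagLeffler, ← tsum_mul_left, ← tsum_mul_left]
    refine tsum_congr fun k => ?_
    rw [hF]
    have h1 : (a * s ^ β) ^ k = a ^ k * s ^ (β * k) := by
      rw [mul_pow, ← Real.rpow_natCast (s ^ β) k, ← Real.rpow_mul hs0.le]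
    have h2 : s ^ (ρ - 1) * s ^ (β * k) = s ^ (β * k + ρ - 1) := by
      rw [← Real.rpow_add hs0]; ring_nf
    field_simp [h1]
    rw [← h2]
    rw [h1]
    ring
  -- assemble
  rw [intervalIntegral.integral_of_le ht.le,
    MeasureTheory.setIntegral_congr_fun measurableSet_Ioc hptwise, ← hswap]
  have hterm : ∀ k : ℕ, ∫ s in Ioc (0:ℝ) t, F k s
      = (Real.Gamma γ * t ^ (ρ + γ - 1)) * ((a * t ^ β) ^ k / Real.Gamma (β * k + (ρ + γ))) := by
    intro k
    rw [hFval k, hpow t ht k, mul_pow]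
    have h1 : β * k + ρ + γ = β * k + (ρ + γ) := by ring
    rw [h1]
    field_simp
  rw [tsum_congr hterm, tsum_mul_left, mittagLeffler]
  field_simp
end
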